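/- arXiv:1404.7417 — 11 statements merged into one kernel-verified Lean document; each statement's English description precedes it below -/
import Mathlib

section
/- If λ, t ∈ ℂ with λ ≠ 0 and both (1,1) and (−1,1) are projectively preperiodic for F_{λ,t} (i.e., the rational map f_{λ,t} is postcritically finite), then both λ and t are algebraic over ℚ. -/
open Filter Topology

noncomputable section

/-- The homogeneous lift `F_{λ,t}(z₁,z₂) = (λ z₁ z₂, z₁² + t z₁ z₂ + z₂²)`
of the quadratic rational map `f_{λ,t}(z) = λ z / (z² + t z + 1)`. -/
def Fh (lam t : ℂ) (z : ℂ × ℂ) : ℂ × ℂ :=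
  (lam * z.1 * z.2, z.1 ^ 2 + t * z.1 * z.2 + z.2 ^ 2)

/-- A point `z ∈ ℂ² \ {0}` is projectively preperiodic for `F_{λ,t}` if some higher
iterate is a nonzero scalar multiple of an earlier iterate. -/
def ProjPreperiodic (lam t : ℂ) (z : ℂ × ℂ) : Prop :=
  ∃ n m : ℕ, m < n ∧ ∃ α : ℂ, α ≠ 0 ∧ (Fh lam t)^[n] z = α • (Fh lam t)^[m] z

/-- All homogeneous cross-products along the orbit of `(a,1)` are nonzero. -/
def CrossNe (lam t a : ℂ) : Prop :=
  ∀ n m : ℕ, m < n →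
    ((Fh lam t)^[n] (a,1)).1 * ((Fh lam t)^[m] (a,1)).2 ≠
      ((Fh lam t)^[m] (a,1)).1 * ((Fh lam t)^[n] (a,1)).2

/-- The complex absolute value, as an absolute value built from the norm. -/
def Complex.abs : AbsoluteValue ℂ ℝ where
  toFun z := ‖z‖
  map_mul' := norm_mul
  nonneg' := norm_nonneg
  eq_zero' _ := norm_eq_zero
  add_le' := norm_add_le

@[simp] lemma Complex.abs_apply (z : ℂ) : Complex.abs z = ‖z‖ := rfl

lemma Complex.abs_ofReal (r : ℝ) : Complex.abs (r : ℂ) = |r| := by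
  simp [Complex.norm_real]

lemma abs_add_ge (x y : ℂ) : Complex.abs x - Complex.abs y ≤ Complex.abs (x + y) := by
  have h := Complex.abs.add_le (x + y) (-y)
  rw [Complex.abs.map_neg] at h
  simp only [add_neg_cancel_right] at h
  linarith

lemma core_cross (lam t a β : ℂ) (P : ℂ → Prop)
    (H0 : a^2 + t*a + 1 ≠ 0)
    (Hw1P : P (lam * a / (a^2 + t*a + 1)))
    (Hw1β : lam * a / (a^2 + t*a + 1) ≠ β)
    (Hstart : Complex.abs (lam * a / (a^2 + t*a + 1) - β) < Complex.abs (a - β))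
    (Hinv : ∀ z, P z → z ≠ β →
      (z^2 + t*z + 1 ≠ 0) ∧ P (lam*z/(z^2 + t*z + 1)) ∧ lam*z/(z^2 + t*z + 1) ≠ β ∧
        Complex.abs (lam*z/(z^2 + t*z + 1) - β) < Complex.abs (z - β)) :
    CrossNe lam t a := by
  classical
  set w : ℕ → ℂ := fun k => Nat.rec a (fun _ z => lam * z / (z^2 + t*z + 1)) k with hw
  have hw0 : w 0 = a := rfl
  have hwsucc : ∀ k, w (k+1) = lam * w k / ((w k)^2 + t * w k + 1) := fun k => rfl
  -- main invariant
  have main : ∀ k, ((Fh lam t)^[k] (a,1)).2 ≠ 0 ∧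
      ((Fh lam t)^[k] (a,1)).1 = w k * ((Fh lam t)^[k] (a,1)).2 ∧
      (1 ≤ k → P (w k) ∧ w k ≠ β) := by
    intro k
    induction k with
    | zero => simp [hw0]
    | succ k ih =>
      obtain ⟨hv, hu, hPk⟩ := ih
      have hden : (w k)^2 + t * w k + 1 ≠ 0 := by
        cases k with
        | zero => simpa [hw0] using H0
        | succ j => exact (Hinv (w (j+1)) (hPk (by omega)).1 (hPk (by omega)).2).1
      set u := ((Fh lam t)^[k] (a,1)).1
      set v := ((Fh lam t)^[k] (a,1)).2
      have hiter : (Fh lam t)^[k+1] (a,1) = Fh lam t (u, v) := by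
        rw [Function.iterate_succ_apply']
      have hFh : Fh lam t (u, v) = (lam * u * v, u^2 + t*u*v + v^2) := rfl
      have hv' : u^2 + t*u*v + v^2 = v^2 * ((w k)^2 + t * w k + 1) := by
        rw [hu]; ring
      refine ⟨?_, ?_, ?_⟩
      · rw [hiter, hFh]
        simp only [hv']
        exact mul_ne_zero (pow_ne_zero _ hv) hden
      · rw [hiter, hFh]
        simp only [hv', hwsucc k]
        rw [hu, div_mul_eq_mul_div, eq_div_iff hden]; ring
      · intro _
        cases k with
        | zero =>
          constructor
          · simpa [hwsucc, hw0] using Hw1P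
          · simpa [hwsucc, hw0] using Hw1β
        | succ j =>
          have h1 := Hinv (w (j+1)) (hPk (by omega)).1 (hPk (by omega)).2
          exact ⟨by simpa [hwsucc] using h1.2.1, by simpa [hwsucc] using h1.2.2.1⟩
  -- strict decrease
  have dec : ∀ k, Complex.abs (w (k+1) - β) < Complex.abs (w k - β) := by
    intro k
    cases k with
    | zero => simpa [hwsucc, hw0] using Hstart
    | succ j =>
      have h1 := Hinv (w (j+1)) ((main (j+1)).2.2 (by omega)).1 ((main (j+1)).2.2 (by omega)).2
      simpa [hwsucc] using h1.2.2.2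
  have sa : StrictAnti (fun k => Complex.abs (w k - β)) := strictAnti_nat_of_succ_lt dec
  intro n m hmn heq
  obtain ⟨hvn, hun, _⟩ := main n
  obtain ⟨hvm, hum, _⟩ := main m
  rw [hun, hum] at heq
  have hwnm : w n = w m := by
    have h2 : (w n - w m) * (((Fh lam t)^[n] (a,1)).2 * ((Fh lam t)^[m] (a,1)).2) = 0 := by
      linear_combination heq
    rcases mul_eq_zero.1 h2 with h | h
    · exact sub_eq_zero.1 h
    · exact absurd h (mul_ne_zero hvn hvm)
  have h4 : Complex.abs (w n - β) < Complex.abs (w m - β) := sa hmn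
  rw [hwnm] at h4
  exact lt_irrefl _ h4
lemma lemmaA (lam t : ℂ) (h0 : lam ≠ 0) (h16 : Complex.abs lam ≤ 1/16) :
    CrossNe lam t 1 ∨ CrossNe lam t (-1) := by
  have habs4 : (4:ℝ) ≤ Complex.abs (2 + t) + Complex.abs (2 - t) := by
    have h := Complex.abs.add_le (2 + t) (2 - t)
    have h2 : (2 + t) + (2 - t) = (4:ℂ) := by ring
    rw [h2] at h
    simpa using h
  -- choose sign
  have key : ∀ s : ℂ, s = 1 ∨ s = -1 → (2:ℝ) ≤ Complex.abs (s^2 + t*s + 1) → CrossNe lam t s := by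
    intro s hs hbig
    set d0 : ℂ := s^2 + t*s + 1 with hd0
    have hd0ne : d0 ≠ 0 := by
      intro h; rw [h] at hbig; simp at hbig; linarith
    have habs_s : Complex.abs s = 1 := by rcases hs with h|h <;> simp [h]
    have hL : 0 < Complex.abs lam := Complex.abs.pos h0
    -- the region
    set P : ℂ → Prop := fun z => Complex.abs z ≤ 1/8 ∧ Complex.abs (t*z) ≤ 1/2 with hP
    -- |t| ≤ 2 * |d0|
    have ht_bound : Complex.abs t ≤ 2 * Complex.abs d0 := by
      have h1 : Complex.abs (t*s) = Complex.abs t := by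
        rw [map_mul, habs_s, mul_one]
      have h2 : t*s = d0 - (s^2 + 1) := by rw [hd0]; ring
      have h3 : Complex.abs (s^2 + 1) ≤ 2 := by
        rcases hs with h|h <;> simp [h] <;> norm_num
      have h4 : Complex.abs (t*s) ≤ Complex.abs d0 + 2 := by
        rw [h2]
        calc Complex.abs (d0 - (s^2+1)) = Complex.abs (d0 + -(s^2+1)) := by ring_nf
          _ ≤ Complex.abs d0 + Complex.abs (-(s^2+1)) := Complex.abs.add_le _ _
          _ = Complex.abs d0 + Complex.abs (s^2+1) := by rw [Complex.abs.map_neg]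
          _ ≤ Complex.abs d0 + 2 := by linarith
      rw [h1] at h4
      linarith
    -- first point
    have hw1abs : Complex.abs (lam * s / d0) ≤ 1/32 := by
      rw [map_div₀, map_mul, habs_s, mul_one]
      rw [div_le_iff₀ (by linarith)]
      nlinarith
    have hw1t : Complex.abs (t * (lam * s / d0)) ≤ 1/8 := by
      have : t * (lam * s / d0) = lam * (t * s) / d0 := by ring
      rw [this, map_div₀, map_mul]
      rw [div_le_iff₀ (by linarith)]
      have h1 : Complex.abs (t*s) = Complex.abs t := by rw [map_mul, habs_s, mul_one]
      rw [h1]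
      nlinarith
    have Hinv : ∀ z, P z → z ≠ 0 →
        (z^2 + t*z + 1 ≠ 0) ∧ P (lam*z/(z^2 + t*z + 1)) ∧ lam*z/(z^2 + t*z + 1) ≠ 0 ∧
        Complex.abs (lam*z/(z^2 + t*z + 1) - 0) < Complex.abs (z - 0) := by
      intro z hz hzne
      obtain ⟨hz1, hz2⟩ := hz
      have hzabs : 0 < Complex.abs z := Complex.abs.pos hzne
      -- denominator lower bound
      have hden_lb : (1:ℝ)/4 ≤ Complex.abs (z^2 + t*z + 1) := by
        have hsplit : z^2 + t*z + 1 = 1 + (t*z + z^2) := by ring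
        rw [hsplit]
        have h1 : Complex.abs (t*z + z^2) ≤ Complex.abs (t*z) + Complex.abs z * Complex.abs z := by
          calc Complex.abs (t*z + z^2) ≤ Complex.abs (t*z) + Complex.abs (z^2) := Complex.abs.add_le _ _
            _ = Complex.abs (t*z) + Complex.abs z * Complex.abs z := by simp [sq, map_mul]
        have h2 := abs_add_ge 1 (t*z + z^2)
        simp only [map_one] at h2
        nlinarith
      have hdne : z^2 + t*z + 1 ≠ 0 := by
        intro h; rw [h] at hden_lb; simp at hden_lb; linarith
      have hdpos : 0 < Complex.abs (z^2 + t*z + 1) := by linarith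
      have hfz : Complex.abs (lam*z/(z^2+t*z+1)) ≤ (1/4) * Complex.abs z := by
        rw [map_div₀, map_mul, div_le_iff₀ hdpos]
        nlinarith
      have htfz : Complex.abs (t*(lam*z/(z^2+t*z+1))) ≤ (1/4) * Complex.abs (t*z) := by
        have he : t*(lam*z/(z^2+t*z+1)) = lam * (t*z)/(z^2+t*z+1) := by ring
        rw [he, map_div₀, map_mul, div_le_iff₀ hdpos]
        nlinarith [Complex.abs.nonneg (t*z)]
      refine ⟨hdne, ⟨by linarith, by linarith [Complex.abs.nonneg (t*z)]⟩, ?_, ?_⟩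
      · exact div_ne_zero (mul_ne_zero h0 hzne) hdne
      · simp only [sub_zero]
        linarith
    apply core_cross lam t s 0 P
    · exact hd0ne
    · constructor
      · rw [← hd0]; linarith
      · rw [← hd0]; linarith
    · rw [← hd0]
      exact div_ne_zero (mul_ne_zero h0 (by rcases hs with h|h <;> simp [h])) hd0ne
    · rw [← hd0]
      simp only [sub_zero]
      rw [habs_s]
      linarith [hw1abs]
    · exact Hinv
  by_cases hc : (2:ℝ) ≤ Complex.abs (2 + t)
  · left
    apply key 1 (Or.inl rfl)
    have : (1:ℂ)^2 + t*1 + 1 = 2 + t := by ring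
    rw [this]; exact hc
  · right
    apply key (-1) (Or.inr rfl)
    have : (-1:ℂ)^2 + t*(-1) + 1 = 2 - t := by ring
    rw [this]
    push_neg at hc
    linarith
set_option maxHeartbeats 1600000 in
lemma lemmaB (lam : ℂ) (h0 : lam ≠ 0) : ∃ t : ℂ, CrossNe lam t 1 := by
  set L : ℝ := Complex.abs lam with hLdef
  have hL : 0 < L := Complex.abs.pos h0
  set ε : ℝ := min (1/4) (L/100) with hεdef
  have hε0 : 0 < ε := lt_min (by norm_num) (by linarith)
  have hε1 : ε ≤ 1/4 := min_le_left _ _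
  have hε2 : ε ≤ L/100 := min_le_right _ _
  set b : ℝ := 1 - ε with hbdef
  have hb34 : 3/4 ≤ b := by rw [hbdef]; linarith
  have hb1 : b ≤ 1 := by rw [hbdef]; linarith
  set β : ℂ := (b : ℂ) with hβdef
  have habsβ : Complex.abs β = b := by
    rw [hβdef, Complex.abs_ofReal, abs_of_pos (by linarith)]
  have hβne : β ≠ 0 := by
    rw [hβdef]
    exact_mod_cast (by linarith : b ≠ 0)
  have hεβ : (ε : ℂ) = 1 - β := by rw [hβdef, hbdef]; push_cast; ring
  set t : ℂ := -β - (1 - lam)/β with htdef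
  set δ : ℝ := 4*ε^2/L with hδdef
  have hδpos : 0 < δ := by rw [hδdef]; positivity
  have hδε : δ ≤ ε/25 := by
    rw [hδdef, div_le_div_iff₀ hL (by norm_num)]
    nlinarith
  have hδ1 : δ ≤ 1 := by linarith
  have hfix : β^2 + t*β + 1 = lam := by
    rw [htdef]; field_simp; ring
  have hnum : ∀ z : ℂ, lam*z - β*(z^2 + t*z + 1) = (z - β)*(1 - β*z) := by
    intro z; linear_combination (-z) * hfix
  have hdenid : ∀ z : ℂ, z^2 + t*z + 1 = lam + (z-β)*(z+β+t) := by
    intro z; linear_combination hfix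
  have hden1 : (1:ℂ)^2 + t*1 + 1 = (lam - (ε:ℂ)^2)/β := by
    rw [htdef, hεβ]; field_simp; ring
  have habsε2 : Complex.abs ((ε:ℂ)^2) = ε^2 := by
    rw [sq, map_mul, Complex.abs_ofReal, abs_of_pos hε0, sq]
  have hlamε : (L:ℝ)/2 ≤ Complex.abs (lam - (ε:ℂ)^2) := by
    have h := abs_add_ge lam (-((ε:ℂ)^2))
    rw [Complex.abs.map_neg, habsε2] at h
    have he : lam + -((ε:ℂ)^2) = lam - (ε:ℂ)^2 := by ring
    rw [he] at h
    nlinarith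
  have hlamεne : lam - (ε:ℂ)^2 ≠ 0 := by
    intro h; rw [h] at hlamε; simp at hlamε; linarith
  have hden1ne : (1:ℂ)^2 + t*1 + 1 ≠ 0 := by
    rw [hden1]; exact div_ne_zero hlamεne hβne
  have hw1 : lam * 1 / ((1:ℂ)^2 + t*1 + 1) - β = β*(ε:ℂ)^2/(lam - (ε:ℂ)^2) := by
    rw [hden1]; field_simp; ring
  have hw1abs : Complex.abs (lam * 1 / ((1:ℂ)^2 + t*1 + 1) - β) ≤ δ/2 := by
    rw [hw1, map_div₀, map_mul, habsβ, habsε2]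
    rw [div_le_iff₀ (by linarith : (0:ℝ) < Complex.abs (lam - (ε:ℂ)^2))]
    have h2 : δ/2 = 2*ε^2/L := by rw [hδdef]; ring
    rw [h2, div_mul_eq_mul_div, le_div_iff₀ hL]
    have h3 : 2*ε^2*(L/2) ≤ 2*ε^2*Complex.abs (lam - (ε:ℂ)^2) :=
      mul_le_mul_of_nonneg_left hlamε (by positivity)
    have h4 : (0:ℝ) ≤ (1-b)*(ε^2*L) := mul_nonneg (by linarith) (by positivity)
    nlinarith [h3, h4]
  have hw1ne : lam * 1 / ((1:ℂ)^2 + t*1 + 1) ≠ β := by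
    rw [← sub_ne_zero, hw1]
    apply div_ne_zero _ hlamεne
    exact mul_ne_zero hβne (pow_ne_zero _ (by exact_mod_cast ne_of_gt hε0))
  have habs1β : Complex.abs ((1:ℂ) - β) = ε := by
    rw [← hεβ, Complex.abs_ofReal, abs_of_pos hε0]
  clear_value L ε b β t δ
  set P : ℂ → Prop := fun z => Complex.abs (z - β) ≤ δ with hP
  have Hinv : ∀ z, P z → z ≠ β →
      (z^2 + t*z + 1 ≠ 0) ∧ P (lam*z/(z^2 + t*z + 1)) ∧ lam*z/(z^2 + t*z + 1) ≠ β ∧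
      Complex.abs (lam*z/(z^2 + t*z + 1) - β) < Complex.abs (z - β) := by
    intro z hz hzβ
    have hzd : Complex.abs (z - β) ≤ δ := hz
    have hzpos : 0 < Complex.abs (z - β) := Complex.abs.pos (sub_ne_zero.2 hzβ)
    -- bound |z+β+t|
    have h1lam : Complex.abs (1 - lam) ≤ 1 + L := by
      rw [hLdef]
      have h := Complex.abs.add_le 1 (-lam)
      rw [Complex.abs.map_neg] at h
      simp only [map_one] at h
      have he : (1:ℂ) - lam = 1 + -lam := by ring
      rw [he]; exact h
    have hfrac : Complex.abs ((1-lam)/β) ≤ (1+L)/(3/4) := by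
      rw [map_div₀, habsβ]
      exact div_le_div₀ (by linarith) h1lam (by norm_num) hb34
    have h2βt : Complex.abs (2*β + t) ≤ 3 + 2*L := by
      have he : 2*β + t = β + -((1-lam)/β) := by rw [htdef]; ring
      rw [he]
      have h := Complex.abs.add_le β (-((1-lam)/β))
      rw [Complex.abs.map_neg, habsβ] at h
      have : (1+L)/(3/4) = 4/3 + 4*L/3 := by ring
      rw [this] at hfrac
      calc Complex.abs (β + -((1-lam)/β)) ≤ b + Complex.abs ((1-lam)/β) := h
        _ ≤ 1 + (4/3 + 4*L/3) := by linarith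
        _ ≤ 3 + 2*L := by linarith
    have hzβt : Complex.abs ((z-β)*(z+β+t)) ≤ δ*(4 + 2*L) := by
      rw [map_mul]
      have he : z + β + t = (z - β) + (2*β + t) := by ring
      have h2 : Complex.abs (z+β+t) ≤ δ + (3 + 2*L) := by
        rw [he]
        calc Complex.abs ((z-β) + (2*β+t)) ≤ Complex.abs (z-β) + Complex.abs (2*β+t) :=
              Complex.abs.add_le _ _
          _ ≤ δ + (3 + 2*L) := by linarith
      calc Complex.abs (z-β) * Complex.abs (z+β+t) ≤ δ * (δ + (3+2*L)) := by
            apply mul_le_mul hzd h2 (Complex.abs.nonneg _) (le_of_lt hδpos)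
        _ ≤ δ*(4 + 2*L) := by nlinarith
    have hsmall : δ*(4 + 2*L) ≤ L/2 := by
      rw [hδdef]
      have h1 : ε^2 ≤ ε*(L/100) := by nlinarith
      have h2 : 4*ε^2/L*(4+2*L) = 16*ε^2/L + 8*ε^2 := by
        field_simp
        ring
      rw [h2]
      have h3 : 16*ε^2/L ≤ 16*ε/100 := by
        rw [div_le_iff₀ hL]; nlinarith
      nlinarith
    -- denominator bound
    have hden_lb : L/2 ≤ Complex.abs (z^2 + t*z + 1) := by
      rw [hdenid z]
      have h := abs_add_ge lam ((z-β)*(z+β+t))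
      nlinarith [Complex.abs.nonneg ((z-β)*(z+β+t))]
    have hdenne : z^2 + t*z + 1 ≠ 0 := by
      intro h; rw [h] at hden_lb; simp at hden_lb; linarith
    have hdenpos : 0 < Complex.abs (z^2+t*z+1) := by linarith
    -- numerator factor bounds
    have h1βz_id : (1:ℂ) - β*z = (1 - β^2) - β*(z - β) := by ring
    have habs1β2 : Complex.abs ((1:ℂ) - β^2) = 1 - b^2 := by
      have he : (1:ℂ) - β^2 = ((1 - b^2 : ℝ) : ℂ) := by rw [hβdef]; push_cast; ring
      rw [he, Complex.abs_ofReal, abs_of_pos (by nlinarith)]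
    have h1βz_ub : Complex.abs ((1:ℂ) - β*z) ≤ 3*ε := by
      rw [h1βz_id]
      have h := Complex.abs.add_le ((1:ℂ) - β^2) (-(β*(z-β)))
      rw [Complex.abs.map_neg, map_mul, habsβ, habs1β2] at h
      have he : (1:ℂ) - β^2 - β*(z-β) = ((1:ℂ) - β^2) + -(β*(z-β)) := by ring
      rw [he]
      have hb2 : 1 - b^2 ≤ 2*ε := by rw [hbdef]; nlinarith
      calc Complex.abs (((1:ℂ) - β^2) + -(β*(z-β))) ≤ (1-b^2) + b * Complex.abs (z-β) := h
        _ ≤ 2*ε + 1*δ := by nlinarith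
        _ ≤ 3*ε := by linarith
    have h1βz_ne : (1:ℂ) - β*z ≠ 0 := by
      intro h
      have h2 : Complex.abs ((1:ℂ) - β^2) ≤ Complex.abs (β*(z-β)) := by
        rw [h1βz_id] at h
        have : (1:ℂ) - β^2 = β*(z-β) := by linear_combination h
        rw [this]
      rw [map_mul, habsβ, habs1β2] at h2
      have hb2 : 7*ε/4 ≤ 1 - b^2 := by rw [hbdef]; nlinarith
      nlinarith
    -- the map value
    have hfzβ : lam*z/(z^2+t*z+1) - β = (z-β)*(1-β*z)/(z^2+t*z+1) := by
      have he : lam*z/(z^2+t*z+1) - β = (lam*z - β*(z^2+t*z+1))/(z^2+t*z+1) := by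
        rw [sub_div, mul_div_cancel_right₀ _ hdenne]
      rw [he, hnum z]
    have habs_fzβ : Complex.abs (lam*z/(z^2+t*z+1) - β) * Complex.abs (z^2+t*z+1) =
        Complex.abs (z-β) * Complex.abs ((1:ℂ)-β*z) := by
      rw [hfzβ, map_div₀, map_mul, div_mul_cancel₀]
      exact ne_of_gt hdenpos
    have hcontr : Complex.abs (lam*z/(z^2+t*z+1) - β) ≤ (6*ε/L) * Complex.abs (z-β) := by
      have h1 : Complex.abs (z-β) * Complex.abs ((1:ℂ)-β*z) ≤ Complex.abs (z-β) * (3*ε) := by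
        nlinarith [Complex.abs.nonneg (z-β)]
      have h2 := habs_fzβ
      have h3 : (6*ε/L) * Complex.abs (z-β) * (L/2) = Complex.abs (z-β) * (3*ε) := by
        field_simp; ring
      nlinarith [Complex.abs.nonneg (lam*z/(z^2+t*z+1) - β)]
    have hfrac_lt1 : 6*ε/L ≤ 6/100 := by
      rw [div_le_iff₀ hL]; nlinarith
    refine ⟨hdenne, ?_, ?_, ?_⟩
    · show Complex.abs (lam*z/(z^2+t*z+1) - β) ≤ δ
      calc Complex.abs (lam*z/(z^2+t*z+1) - β) ≤ (6*ε/L) * Complex.abs (z-β) := hcontr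
        _ ≤ (6/100) * δ := by nlinarith [Complex.abs.nonneg (z-β), hzd]
        _ ≤ δ := by linarith
    · rw [← sub_ne_zero, hfzβ]
      exact div_ne_zero (mul_ne_zero (sub_ne_zero.2 hzβ) h1βz_ne) hdenne
    · calc Complex.abs (lam*z/(z^2+t*z+1) - β) ≤ (6*ε/L) * Complex.abs (z-β) := hcontr
        _ ≤ (6/100) * Complex.abs (z-β) := by nlinarith
        _ < Complex.abs (z-β) := by nlinarith
  -- apply the core lemma
  refine ⟨t, core_cross lam t 1 β P ?_ ?_ ?_ ?_ Hinv⟩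
  · simpa using hden1ne
  · show Complex.abs (lam * 1 / ((1:ℂ)^2 + t*1 + 1) - β) ≤ δ
    linarith
  · exact hw1ne
  · rw [habs1β]
    have : δ/2 < ε := by linarith
    linarith
section PolyOrbit

open Polynomial

/-- Polynomial version of `Fh` over `ℚ[λ][t]`: inner variable `C X` is `λ`,
outer variable `X` is `t`. -/
def PF : (Polynomial (Polynomial ℚ)) × (Polynomial (Polynomial ℚ)) →
    (Polynomial (Polynomial ℚ)) × (Polynomial (Polynomial ℚ)) := fun z =>
  (Polynomial.C Polynomial.X * z.1 * z.2,
    z.1^2 + Polynomial.X * z.1 * z.2 + z.2^2)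

/-- Evaluation `ℚ[λ][t] → ℂ` at `(lam, t)`. -/
def Ehom (lam t : ℂ) : Polynomial (Polynomial ℚ) →+* ℂ :=
  Polynomial.eval₂RingHom (Polynomial.eval₂RingHom (algebraMap ℚ ℂ) lam) t

lemma Ehom_C_X (lam t : ℂ) : Ehom lam t (Polynomial.C Polynomial.X) = lam := by
  simp [Ehom]

lemma Ehom_X (lam t : ℂ) : Ehom lam t Polynomial.X = t := by
  simp [Ehom]

lemma Ehom_semiconj (lam t : ℂ) :
    Function.Semiconj (fun z : (Polynomial (Polynomial ℚ)) × (Polynomial (Polynomial ℚ)) =>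
      ((Ehom lam t) z.1, (Ehom lam t) z.2)) PF (Fh lam t) := by
  intro z
  simp only [PF, Fh, Prod.mk.injEq]
  constructor
  · rw [map_mul, map_mul, Ehom_C_X]
  · rw [map_add, map_add, map_pow, map_pow, map_mul, map_mul, Ehom_X]

/-- The polynomial orbit. -/
def Zp (a : Polynomial (Polynomial ℚ)) (k : ℕ) :
    (Polynomial (Polynomial ℚ)) × (Polynomial (Polynomial ℚ)) := PF^[k] (a, 1)

lemma Ehom_orbit (lam t : ℂ) (a : Polynomial (Polynomial ℚ)) (k : ℕ) :
    ((Ehom lam t) (Zp a k).1, (Ehom lam t) (Zp a k).2)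
      = (Fh lam t)^[k] ((Ehom lam t) a, 1) := by
  have h := ((Ehom_semiconj lam t).iterate_right k) (a, 1)
  simpa [Zp, map_one] using h

/-- The cross-product polynomial. -/
def crossPoly (a : Polynomial (Polynomial ℚ)) (n m : ℕ) : Polynomial (Polynomial ℚ) :=
  (Zp a n).1 * (Zp a m).2 - (Zp a m).1 * (Zp a n).2

lemma Ehom_crossPoly (lam t : ℂ) (a : Polynomial (Polynomial ℚ)) (n m : ℕ) :
    Ehom lam t (crossPoly a n m) =
      ((Fh lam t)^[n] ((Ehom lam t) a,1)).1 * ((Fh lam t)^[m] ((Ehom lam t) a,1)).2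
      - ((Fh lam t)^[m] ((Ehom lam t) a,1)).1 * ((Fh lam t)^[n] ((Ehom lam t) a,1)).2 := by
  have hn1 := congrArg Prod.fst (Ehom_orbit lam t a n)
  have hn2 := congrArg Prod.snd (Ehom_orbit lam t a n)
  have hm1 := congrArg Prod.fst (Ehom_orbit lam t a m)
  have hm2 := congrArg Prod.snd (Ehom_orbit lam t a m)
  simp only at hn1 hn2 hm1 hm2
  simp only [crossPoly, map_sub, map_mul]
  rw [hn1, hn2, hm1, hm2]

/-- If the point is projectively preperiodic with indices `(n,m)`, the evaluated
cross polynomial vanishes. -/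
lemma crossPoly_eval_eq_zero (lam t x : ℂ) (a : Polynomial (Polynomial ℚ))
    (ha : Ehom lam t a = x) {n m : ℕ} {α : ℂ}
    (heq : (Fh lam t)^[n] (x, 1) = α • (Fh lam t)^[m] (x, 1)) :
    Ehom lam t (crossPoly a n m) = 0 := by
  rw [Ehom_crossPoly, ha]
  rw [Prod.ext_iff] at heq
  obtain ⟨h1, h2⟩ := heq
  simp only [Prod.smul_fst, Prod.smul_snd, smul_eq_mul] at h1 h2
  rw [h1, h2]
  ring

/-- If all cross products are nonzero at some parameter, the cross polynomial is nonzero. -/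
lemma crossPoly_ne_zero_of_crossNe (lam t x : ℂ) (a : Polynomial (Polynomial ℚ))
    (ha : Ehom lam t a = x) (h : CrossNe lam t x) {n m : ℕ} (hnm : m < n) :
    crossPoly a n m ≠ 0 := by
  intro h0
  have := Ehom_crossPoly lam t a n m
  rw [h0, map_zero, ha] at this
  exact h n m hnm (sub_eq_zero.mp this.symm)

end PolyOrbit
section FieldTheory

open Polynomial

lemma Ehom_crossPoly_ne_zero (lam t : ℂ) (a : Polynomial (Polynomial ℚ))
    (h : CrossNe lam t (Ehom lam t a)) {n m : ℕ} (hnm : m < n) :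
    Ehom lam t (crossPoly a n m) ≠ 0 := by
  intro h0
  rw [Ehom_crossPoly] at h0
  exact h n m hnm (sub_eq_zero.mp h0)

lemma exists_good_rat (B : Polynomial ℚ) (hB : B ≠ 0) :
    ∃ x : ℚ, 0 < x ∧ x ≤ 1/16 ∧ ¬ B.IsRoot x := by
  have hfin : {x : ℚ | B.IsRoot x}.Finite := Polynomial.finite_setOf_isRoot hB
  have hinj : Function.Injective (fun k : ℕ => (1:ℚ)/(16+(k:ℚ))) := by
    intro a b hab
    simp only at hab
    have ha : (0:ℚ) < 16 + (a:ℚ) := by positivity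
    have hb : (0:ℚ) < 16 + (b:ℚ) := by positivity
    rw [div_eq_div_iff ha.ne' hb.ne'] at hab
    have : (a:ℚ) = (b:ℚ) := by linarith
    exact_mod_cast this
  have hTinf : (Set.range (fun k : ℕ => (1:ℚ)/(16+(k:ℚ)))).Infinite :=
    Set.infinite_range_of_injective hinj
  obtain ⟨x, hxT, hxS⟩ := (hTinf.diff hfin).nonempty
  obtain ⟨k, hk⟩ := hxT
  simp only at hk
  refine ⟨x, ?_, ?_, hxS⟩
  · rw [← hk]; positivity
  · rw [← hk, div_le_div_iff₀ (by positivity) (by norm_num)]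
    have : (0:ℚ) ≤ (k:ℚ) := by positivity
    linarith

lemma lam_algebraic
    (lam t : ℂ)
    (p q : Polynomial (Polynomial ℚ))
    {n m n' m' : ℕ} (hnm : m < n) (hnm' : m' < n')
    (hpdef : p = crossPoly 1 n m) (hqdef : q = crossPoly (-1) n' m')
    (hEp : Ehom lam t p = 0) (hEq : Ehom lam t q = 0) :
    IsAlgebraic ℚ lam := by
  by_contra htr
  -- p is a nonzero polynomial (use Lemma B at λ₀ = 1)
  have hp0 : p ≠ 0 := by
    obtain ⟨t1, ht1⟩ := lemmaB 1 one_ne_zero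
    intro h0
    apply Ehom_crossPoly_ne_zero 1 t1 1 (by rw [map_one]; exact ht1) hnm
    rw [← hpdef, h0, map_zero]
  -- injective evaluation of the λ-variable
  set inner : Polynomial ℚ →+* ℂ := Polynomial.eval₂RingHom (algebraMap ℚ ℂ) lam with hinner
  have hinner_eval : ∀ r : Polynomial ℚ, inner r = Polynomial.aeval lam r := fun r => rfl
  have hinj : Function.Injective inner := by
    intro x y hxy
    have h0 : Polynomial.aeval lam (x - y) = 0 := by
      rw [map_sub, ← hinner_eval x, ← hinner_eval y, hxy, sub_self]
    by_contra hne
    exact htr ⟨x - y, sub_ne_zero.2 hne, h0⟩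
  -- the function field
  set F := RatFunc ℚ with hF
  set lift : F →+* ℂ := IsFractionRing.lift hinj with hlift
  letI : Algebra F ℂ := lift.toAlgebra
  have halgmapFC : algebraMap F ℂ = lift := rfl
  have hcomp : (algebraMap F ℂ).comp (algebraMap (Polynomial ℚ) F) = inner := by
    refine RingHom.ext fun r => ?_
    rw [RingHom.comp_apply, halgmapFC, IsFractionRing.lift_algebraMap]
  -- evaluation of mapped polynomials
  have hmap_eval : ∀ (s : ℂ) (r : Polynomial (Polynomial ℚ)),
      Polynomial.aeval s (r.map (algebraMap (Polynomial ℚ) F)) = Ehom lam s r := by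
    intro s r
    rw [Polynomial.aeval_def, Polynomial.eval₂_map, hcomp]
    rfl
  -- t is algebraic over F
  have hphat : (p.map (algebraMap (Polynomial ℚ) F)) ≠ 0 := by
    intro h0
    exact hp0 (Polynomial.map_eq_zero_iff (IsFractionRing.injective (Polynomial ℚ) F) |>.mp h0)
  have htalg : IsAlgebraic F t := ⟨p.map (algebraMap (Polynomial ℚ) F), hphat, by
    rw [hmap_eval t p]; exact hEp⟩
  have htint : IsIntegral F t := htalg.isIntegral
  set g : Polynomial F := minpoly F t with hgdef
  have hgdvd_p : g ∣ p.map (algebraMap (Polynomial ℚ) F) :=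
    minpoly.dvd F t (by rw [hmap_eval t p]; exact hEp)
  have hgdvd_q : g ∣ q.map (algebraMap (Polynomial ℚ) F) :=
    minpoly.dvd F t (by rw [hmap_eval t q]; exact hEq)
  have hgdeg : 0 < g.natDegree := minpoly.natDegree_pos htint
  obtain ⟨h1, hph⟩ := hgdvd_p
  obtain ⟨u1, hqu⟩ := hgdvd_q
  -- clear denominators
  set M := nonZeroDivisors (Polynomial ℚ) with hM
  obtain ⟨cg, hcg⟩ := IsLocalization.integerNormalization_map_to_map M g
  obtain ⟨ch, hch⟩ := IsLocalization.integerNormalization_map_to_map M h1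
  obtain ⟨cu, hcu⟩ := IsLocalization.integerNormalization_map_to_map M u1
  set G := IsLocalization.integerNormalization M g with hG
  set H := IsLocalization.integerNormalization M h1 with hH
  set U := IsLocalization.integerNormalization M u1 with hU
  have hcg0 : (cg : Polynomial ℚ) ≠ 0 := mem_nonZeroDivisors_iff_ne_zero.mp cg.2
  have hch0 : (ch : Polynomial ℚ) ≠ 0 := mem_nonZeroDivisors_iff_ne_zero.mp ch.2
  have hcu0 : (cu : Polynomial ℚ) ≠ 0 := mem_nonZeroDivisors_iff_ne_zero.mp cu.2
  have hsmul : ∀ (c : Polynomial ℚ) (r : Polynomial F),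
      c • r = Polynomial.C (algebraMap (Polynomial ℚ) F c) * r := by
    intro c r
    rw [← Polynomial.smul_eq_C_mul, algebraMap_smul]
  have hamap_ne : ∀ c : Polynomial ℚ, c ≠ 0 → algebraMap (Polynomial ℚ) F c ≠ 0 := by
    intro c hc h0
    exact hc (IsFractionRing.injective (Polynomial ℚ) F (by rw [h0, map_zero]))
  -- main factorization identities over ℚ[X][Y]
  have hmapinj : Function.Injective
      (Polynomial.map (algebraMap (Polynomial ℚ) F) :
        Polynomial (Polynomial ℚ) → Polynomial F) :=
    Polynomial.map_injective _ (IsFractionRing.injective (Polynomial ℚ) F)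
  have hGH : G * H = Polynomial.C ((cg : Polynomial ℚ) * ch) * p := by
    apply hmapinj
    rw [Polynomial.map_mul, hcg, hch, Polynomial.map_mul, Polynomial.map_C,
      hsmul, hsmul, hph]
    simp only [map_mul]
    ring
  have hGU : G * U = Polynomial.C ((cg : Polynomial ℚ) * cu) * q := by
    apply hmapinj
    rw [Polynomial.map_mul, hcg, hcu, Polynomial.map_mul, Polynomial.map_C,
      hsmul, hsmul, hqu]
    simp only [map_mul]
    ring
  -- degree of G
  have hGdeg : G.natDegree = g.natDegree := by
    have h1 : (G.map (algebraMap (Polynomial ℚ) F)).natDegree = G.natDegree :=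
      Polynomial.natDegree_map_eq_of_injective (IsFractionRing.injective (Polynomial ℚ) F) G
    rw [hcg, hsmul, Polynomial.natDegree_C_mul (hamap_ne _ hcg0)] at h1
    omega
  have hGne : G ≠ 0 := by
    intro h0
    rw [h0, Polynomial.natDegree_zero] at hGdeg
    omega
  -- choose a small rational parameter avoiding bad loci
  set B : Polynomial ℚ := G.leadingCoeff * ((cg : Polynomial ℚ) * ch) * ((cg : Polynomial ℚ) * cu)
    with hB
  have hB0 : B ≠ 0 := by
    apply mul_ne_zero (mul_ne_zero _ (mul_ne_zero hcg0 hch0)) (mul_ne_zero hcg0 hcu0)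
    exact Polynomial.leadingCoeff_ne_zero.mpr hGne
  obtain ⟨x, hx0, hx16, hxroot⟩ := exists_good_rat B hB0
  set lamS : ℂ := algebraMap ℚ ℂ x with hlamS
  set innerS : Polynomial ℚ →+* ℂ := Polynomial.eval₂RingHom (algebraMap ℚ ℂ) lamS with hinnerS
  have hinnerS_eval : ∀ r : Polynomial ℚ, innerS r = algebraMap ℚ ℂ (r.eval x) := by
    intro r
    rw [hinnerS]
    simp only [Polynomial.coe_eval₂RingHom, hlamS]
    exact Polynomial.eval₂_at_apply (algebraMap ℚ ℂ) x
  have hinnerS_ne : ∀ r : Polynomial ℚ, r.eval x ≠ 0 → innerS r ≠ 0 := by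
    intro r hr h0
    rw [hinnerS_eval] at h0
    exact hr ((algebraMap ℚ ℂ).injective (by rw [h0, map_zero]))
  -- components of B do not vanish at x
  have hBx : B.eval x ≠ 0 := hxroot
  rw [hB, Polynomial.eval_mul, Polynomial.eval_mul] at hBx
  obtain ⟨h12, hcgcu⟩ := mul_ne_zero_iff.mp hBx
  obtain ⟨hlcG, hcgch⟩ := mul_ne_zero_iff.mp h12
  -- specialize and find a root t'
  have hGsdeg : (G.map innerS).natDegree = G.natDegree :=
    Polynomial.natDegree_map_of_leadingCoeff_ne_zero innerS (hinnerS_ne _ hlcG)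
  have hGsdeg_pos : 0 < (G.map innerS).degree := by
    rw [← Polynomial.natDegree_pos_iff_degree_pos, hGsdeg, hGdeg]
    exact hgdeg
  obtain ⟨t', ht'⟩ := Complex.exists_root hGsdeg_pos
  have hESdef : ∀ r : Polynomial (Polynomial ℚ),
      Ehom lamS t' r = Polynomial.eval₂ innerS t' r := fun r => rfl
  have hESG : Ehom lamS t' G = 0 := by
    rw [hESdef, Polynomial.eval₂_eq_eval_map]
    exact ht'
  have hES_C : ∀ c : Polynomial ℚ, Ehom lamS t' (Polynomial.C c) = innerS c := by
    intro c; rw [hESdef, Polynomial.eval₂_C]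
  have hESp : Ehom lamS t' p = 0 := by
    have h := congrArg (Ehom lamS t') hGH
    rw [map_mul, map_mul, hESG, zero_mul, hES_C] at h
    rcases mul_eq_zero.mp h.symm with h2 | h2
    · exact absurd h2 (hinnerS_ne _ hcgch)
    · exact h2
  have hESq : Ehom lamS t' q = 0 := by
    have h := congrArg (Ehom lamS t') hGU
    rw [map_mul, map_mul, hESG, zero_mul, hES_C] at h
    rcases mul_eq_zero.mp h.symm with h2 | h2
    · exact absurd h2 (hinnerS_ne _ hcgcu)
    · exact h2
  -- small parameter: apply Lemma A
  have hlamS_cast : lamS = ((x : ℝ) : ℂ) := by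
    rw [hlamS]
    push_cast
    rfl
  have hxR : (0:ℝ) < (x:ℝ) := by exact_mod_cast hx0
  have hlamS_ne : lamS ≠ 0 := by
    rw [hlamS_cast]
    exact_mod_cast hxR.ne'
  have hlamS_abs : Complex.abs lamS ≤ 1/16 := by
    rw [hlamS_cast, Complex.abs_ofReal, abs_of_pos hxR]
    calc ((x:ℝ)) ≤ ((1/16:ℚ):ℝ) := by exact_mod_cast hx16
      _ = 1/16 := by norm_num
  rcases lemmaA lamS t' hlamS_ne hlamS_abs with hA | hA
  · apply Ehom_crossPoly_ne_zero lamS t' 1 (by rw [map_one]; exact hA) hnm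
    rw [← hpdef]
    exact hESp
  · apply Ehom_crossPoly_ne_zero lamS t' (-1) (by rw [map_neg, map_one]; exact hA) hnm'
    rw [← hqdef]
    exact hESq

end FieldTheory
section Final

open Polynomial

lemma t_algebraic (lam t : ℂ) (hlam : lam ≠ 0) (halam : IsAlgebraic ℚ lam)
    (p : Polynomial (Polynomial ℚ)) {n m : ℕ} (hnm : m < n)
    (hpdef : p = crossPoly 1 n m) (hEp : Ehom lam t p = 0) :
    IsAlgebraic ℚ t := by
  have hint : IsIntegral ℚ lam := halam.isIntegral
  set K := IntermediateField.adjoin ℚ ({lam} : Set ℂ) with hK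
  haveI : FiniteDimensional ℚ K := IntermediateField.adjoin.finiteDimensional hint
  have hmem : lam ∈ K := IntermediateField.mem_adjoin_simple_self ℚ lam
  set lamK : K := ⟨lam, hmem⟩ with hlamK
  set φK : Polynomial ℚ →+* K := (Polynomial.aeval lamK).toRingHom with hφK
  have halgK : algebraMap K ℂ lamK = lam := rfl
  have hφKspec : ∀ r : Polynomial ℚ, algebraMap K ℂ (φK r) =
      Polynomial.eval₂ (algebraMap ℚ ℂ) lam r := by
    intro r
    have h1 : algebraMap K ℂ (Polynomial.aeval lamK r) =
        Polynomial.aeval (algebraMap K ℂ lamK) r :=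
      (Polynomial.aeval_algebraMap_apply ℂ lamK r).symm
    rw [hφK]
    simp only [AlgHom.toRingHom_eq_coe, RingHom.coe_coe]
    rw [h1, halgK, Polynomial.aeval_def]
  have hcompK : (algebraMap K ℂ).comp φK = Polynomial.eval₂RingHom (algebraMap ℚ ℂ) lam :=
    RingHom.ext fun r => by rw [RingHom.comp_apply, hφKspec]; rfl
  have hmapevalK : ∀ (s : ℂ) (r : Polynomial (Polynomial ℚ)),
      Polynomial.eval₂ (algebraMap K ℂ) s (r.map φK) = Ehom lam s r := by
    intro s r
    rw [Polynomial.eval₂_map, hcompK]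
    rfl
  set pK := p.map φK with hpK
  have hpK0 : pK ≠ 0 := by
    obtain ⟨t2, ht2⟩ := lemmaB lam hlam
    intro h0
    apply Ehom_crossPoly_ne_zero lam t2 1 (by rw [map_one]; exact ht2) hnm
    rw [← hpdef, ← hmapevalK t2 p, ← hpK, h0, Polynomial.eval₂_zero]
  have htK : IsAlgebraic K t := ⟨pK, hpK0, by
    rw [Polynomial.aeval_def, hpK, hmapevalK]; exact hEp⟩
  haveI : Algebra.IsIntegral ℚ K := Algebra.IsIntegral.of_finite ℚ K
  exact (isIntegral_trans t htK.isIntegral).isAlgebraic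

end Final


/-- If `λ ≠ 0` and both critical points `+1` and `-1` are preperiodic for
`f_{λ,t}` (i.e. `f_{λ,t}` is postcritically finite), then `λ` and `t` are
algebraic over `ℚ`. -/
theorem PCF_implies_algebraic (lam t : ℂ) (hlam : lam ≠ 0)
    (hplus : ProjPreperiodic lam t (1, 1)) (hminus : ProjPreperiodic lam t (-1, 1)) :
    IsAlgebraic ℚ lam ∧ IsAlgebraic ℚ t := by
  obtain ⟨n, m, hnm, α, hα, heq⟩ := hplus
  obtain ⟨n', m', hnm', α', hα', heq'⟩ := hminus
  have hEp : Ehom lam t (crossPoly 1 n m) = 0 :=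
    crossPoly_eval_eq_zero lam t 1 1 (map_one _) heq
  have hEq : Ehom lam t (crossPoly (-1) n' m') = 0 :=
    crossPoly_eval_eq_zero lam t (-1) (-1) (by rw [map_neg, map_one]) heq'
  have hlamAlg : IsAlgebraic ℚ lam :=
    lam_algebraic lam t _ _ hnm hnm' rfl rfl hEp hEq
  exact ⟨hlamAlg, t_algebraic lam t hlam hlamAlg _ hnm rfl hEp⟩
end
end

section
/- For every λ ∈ ℂ ∖ {0} and every pair of integers n, m ≥ 0, there exists t ∈ ℂ such that F_{λ,t}ⁿ(1,1) is not a scalar multiple of F_{λ,t}ᵐ(−1,1); equivalently, f_{λ,t}ⁿ(+1) ≠ f_{λ,t}ᵐ(−1) as points of ℙ¹(ℂ). In particular, the two critical points satisfy no orbit relation of the form f_tⁿ(+1) ≡ f_tᵐ(−1) identically in t. -/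
open Filter Topology

noncomputable section

/-- For every `λ ≠ 0` and all integers `n, m ≥ 0`, there is a parameter `t`
at which `F_{λ,t}ⁿ(1,1)` is not a (nonzero) scalar multiple of
`F_{λ,t}ᵐ(-1,1)`; equivalently `f_{λ,t}ⁿ(+1) ≠ f_{λ,t}ᵐ(-1)` in `ℙ¹(ℂ)`.
In particular the two critical points satisfy no orbit relation
`f_tⁿ(+1) ≡ f_tᵐ(-1)` identically in `t`. -/
theorem no_orbit_relation (lam : ℂ) (hlam : lam ≠ 0) (n m : ℕ) :
    ∃ t : ℂ, ¬ ∃ α : ℂ, α ≠ 0 ∧ (Fh lam t)^[n] (1, 1) = α • (Fh lam t)^[m] (-1, 1) := by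
  -- Choose `t = 2 - λ`, so that the critical point `-1` is fixed (indeed
  -- superattracting) and the line `z₁ + z₂ = 0` through it is totally invariant.
  refine ⟨2 - lam, ?_⟩
  rintro ⟨α, hα, heq⟩
  set F := Fh lam (2 - lam) with hF
  -- The key identity: the sum of coordinates squares under `F`.
  have key : ∀ z : ℂ × ℂ, (F z).1 + (F z).2 = (z.1 + z.2) ^ 2 := by
    intro z
    simp only [hF, Fh]
    ring
  -- Along the orbit of `(1,1)` the sum of coordinates is `2^(2^k) ≠ 0`.
  have h1 : ∀ k : ℕ, ((F)^[k] (1, 1)).1 + ((F)^[k] (1, 1)).2 = 2 ^ (2 ^ k) := by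
    intro k
    induction k with
    | zero => norm_num
    | succ k ih =>
        rw [Function.iterate_succ_apply', key, ih, ← pow_mul, pow_succ]
  -- Along the orbit of `(-1,1)` the sum of coordinates stays `0`.
  have h2 : ∀ k : ℕ, ((F)^[k] (-1, 1)).1 + ((F)^[k] (-1, 1)).2 = 0 := by
    intro k
    induction k with
    | zero => norm_num
    | succ k ih =>
        rw [Function.iterate_succ_apply', key, ih]
        ring
  -- Apply the sum-of-coordinates functional to the alleged relation.
  have hsum := congrArg (fun z : ℂ × ℂ => z.1 + z.2) heq
  simp only [Prod.smul_fst, Prod.smul_snd, smul_eq_mul] at hsum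
  rw [h1 n] at hsum
  have : (2 : ℂ) ^ (2 ^ n) = 0 := by
    rw [hsum, ← mul_add, h2 m, mul_zero]
  exact pow_ne_zero _ two_ne_zero this
end
end

section
/- There exists a real number t₀ > 2√3 such that the critical point 1 is periodic of exact period 3 for the map f_{−2,t₀}(z) = −2z/(z² + t₀ z + 1): namely, F_{−2,t₀}³(1,1) is a nonzero scalar multiple of (1,1), while F_{−2,t₀}(1,1) is not a scalar multiple of (1,1). -/
open Filter Topology

noncomputable section

/-- There exists a real parameter `t₀ > 2√3` such that the critical point `1`
is periodic of exact period `3` for `f_{-2,t₀}`: the third iterate of `(1,1)`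
under `F_{-2,t₀}` is a nonzero scalar multiple of `(1,1)`, while the first
iterate is not a scalar multiple of `(1,1)`. -/
theorem exists_period_three_parameter :
    ∃ t₀ : ℝ, 2 * Real.sqrt 3 < t₀ ∧
      (∃ α : ℂ, α ≠ 0 ∧ (Fh (-2) (t₀ : ℂ))^[3] (1, 1) = α • ((1, 1) : ℂ × ℂ)) ∧
      ¬ ∃ α : ℂ, Fh (-2) (t₀ : ℂ) (1, 1) = α • ((1, 1) : ℂ × ℂ) := by
  -- Find a root t₀ of Q(t) = 3t³ + 4t² − 32t − 64 in [3.48, 3.49] by IVT.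
  obtain ⟨t₀, hmem, hQ⟩ :
      ∃ t₀ ∈ Set.Icc (3.48 : ℝ) 3.49, 3 * t₀ ^ 3 + 4 * t₀ ^ 2 - 32 * t₀ - 64 = 0 := by
    have hcont : ContinuousOn (fun t : ℝ => 3 * t ^ 3 + 4 * t ^ 2 - 32 * t - 64)
        (Set.Icc (3.48 : ℝ) 3.49) := by fun_prop
    have h := intermediate_value_Icc (by norm_num : (3.48 : ℝ) ≤ 3.49) hcont
    have h0 : (0 : ℝ) ∈ Set.Icc (3 * (3.48:ℝ) ^ 3 + 4 * 3.48 ^ 2 - 32 * 3.48 - 64)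
        (3 * (3.49:ℝ) ^ 3 + 4 * 3.49 ^ 2 - 32 * 3.49 - 64) := by
      constructor <;> norm_num
    obtain ⟨t₀, ht₀, hval⟩ := h h0
    exact ⟨t₀, ht₀, hval⟩
  have hlb : (3.48 : ℝ) ≤ t₀ := hmem.1
  refine ⟨t₀, ?_, ?_, ?_⟩
  · -- 2√3 < 3.48 ≤ t₀
    have h1 : Real.sqrt 3 < 1.74 := by
      rw [show (1.74 : ℝ) = Real.sqrt (1.74 ^ 2) by
        rw [Real.sqrt_sq (by norm_num)]]
      exact Real.sqrt_lt_sqrt (by norm_num) (by norm_num)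
    nlinarith
  · -- third iterate is (α, α) with α = 8t³ + 16t² − 64t − 128 ≠ 0
    set t : ℂ := (t₀ : ℂ) with ht
    refine ⟨8 * t ^ 3 + 16 * t ^ 2 - 64 * t - 128, ?_, ?_⟩
    · have : ((8 * t₀ ^ 3 + 16 * t₀ ^ 2 - 64 * t₀ - 128 : ℝ) : ℂ)
          = 8 * t ^ 3 + 16 * t ^ 2 - 64 * t - 128 := by push_cast; ring
      rw [← this]
      have hpos : (0 : ℝ) < 8 * t₀ ^ 3 + 16 * t₀ ^ 2 - 64 * t₀ - 128 := by nlinarith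
      exact_mod_cast hpos.ne'
    · have hQC : 3 * t ^ 3 + 4 * t ^ 2 - 32 * t - 64 = 0 := by
        rw [ht]
        exact_mod_cast congrArg (fun x : ℝ => (x : ℂ)) hQ
      show Fh (-2) t (Fh (-2) t (Fh (-2) t (1, 1))) = _
      simp only [Fh, Prod.smul_mk, smul_eq_mul, Prod.mk.injEq]
      constructor
      · ring
      · linear_combination (-t - 4) * hQC
  · rintro ⟨α, h⟩
    simp only [Fh, Prod.smul_mk, smul_eq_mul, Prod.mk.injEq] at h
    obtain ⟨h1, h2⟩ := h
    have : (t₀ : ℂ) = -4 := by linear_combination h2 - h1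
    have : t₀ = -4 := by exact_mod_cast this
    linarith
end
end

section
/- For each λ ∈ ℂ ∖ {0} there exist constants c, C > 0 such that c |t|⁻¹ ‖(z₁,z₂)‖² ≤ ‖F_{λ,t}(z₁,z₂)‖ ≤ C |t| ‖(z₁,z₂)‖² for all t ∈ ℂ with |t| ≥ 1 and all (z₁,z₂) ∈ ℂ² ∖ {(0,0)}. Consequently, there exists R > 1 such that |H⁺_λ(t)| ≤ 3 log|t| and |H⁻_λ(t)| ≤ 3 log|t| for all t with |t| ≥ R; in particular H^±_λ(t) = O(log|t|) as t → ∞. -/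
open Filter Topology

noncomputable section

set_option maxHeartbeats 1000000 in
lemma Fh_bounds (lam : ℂ) (hlam : lam ≠ 0) (t : ℂ) (ht : 1 ≤ ‖t‖)
    (z : ℂ × ℂ) (hz : z ≠ 0) :
    ‖lam‖ / (‖lam‖ + 2) * (‖t‖)⁻¹ * ‖z‖ ^ 2 ≤ ‖Fh lam t z‖ ∧
      ‖Fh lam t z‖ ≤ (‖lam‖ + 3) * ‖t‖ * ‖z‖ ^ 2 := by
  have htn : ‖t‖ = ‖t‖ := rfl
  set A := ‖t‖ with hAdef
  have hA0 : (0:ℝ) < A := lt_of_lt_of_le one_pos ht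
  have hl0 : (0:ℝ) < ‖lam‖ := norm_pos_iff.mpr hlam
  have h1 : ‖z.1‖ ≤ ‖z‖ := norm_fst_le z
  have h2 : ‖z.2‖ ≤ ‖z‖ := norm_snd_le z
  have hz0 : (0:ℝ) < ‖z‖ := norm_pos_iff.mpr hz
  set M := ‖Fh lam t z‖ with hMdef
  have hM0 : (0:ℝ) ≤ M := norm_nonneg _
  have hP : ‖lam * z.1 * z.2‖ ≤ M := norm_fst_le (Fh lam t z)
  have hQ : ‖z.1 ^ 2 + t * z.1 * z.2 + z.2 ^ 2‖ ≤ M := norm_snd_le (Fh lam t z)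
  constructor
  · -- lower bound
    have e1 : ‖lam * z.1 * (z.1 ^ 2 + t * z.1 * z.2 + z.2 ^ 2)‖ ≤ ‖lam‖ * ‖z‖ * M := by
      rw [norm_mul, norm_mul]
      gcongr
    have e1' : ‖lam * z.2 * (z.1 ^ 2 + t * z.1 * z.2 + z.2 ^ 2)‖ ≤ ‖lam‖ * ‖z‖ * M := by
      rw [norm_mul, norm_mul]
      gcongr
    have ht1 : ‖t * z.1 + z.2‖ ≤ (A + 1) * ‖z‖ := by
      calc ‖t * z.1 + z.2‖ ≤ ‖t * z.1‖ + ‖z.2‖ := norm_add_le _ _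
        _ = A * ‖z.1‖ + ‖z.2‖ := by rw [norm_mul, htn]
        _ ≤ A * ‖z‖ + ‖z‖ := by gcongr
        _ = (A + 1) * ‖z‖ := by ring
    have ht2 : ‖z.1 + t * z.2‖ ≤ (A + 1) * ‖z‖ := by
      calc ‖z.1 + t * z.2‖ ≤ ‖z.1‖ + ‖t * z.2‖ := norm_add_le _ _
        _ = ‖z.1‖ + A * ‖z.2‖ := by rw [norm_mul, htn]
        _ ≤ ‖z‖ + A * ‖z‖ := by gcongr
        _ = (A + 1) * ‖z‖ := by ring
    have e2 : ‖(t * z.1 + z.2) * (lam * z.1 * z.2)‖ ≤ (A + 1) * ‖z‖ * M := by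
      rw [norm_mul]
      exact mul_le_mul ht1 hP (norm_nonneg _) (by positivity)
    have e2' : ‖(z.1 + t * z.2) * (lam * z.1 * z.2)‖ ≤ (A + 1) * ‖z‖ * M := by
      rw [norm_mul]
      exact mul_le_mul ht2 hP (norm_nonneg _) (by positivity)
    have est1 : ‖lam‖ * ‖z.1‖ ^ 3 ≤ (‖lam‖ + A + 1) * ‖z‖ * M := by
      have hid : lam * z.1 ^ 3 =
          lam * z.1 * (z.1 ^ 2 + t * z.1 * z.2 + z.2 ^ 2)
            - (t * z.1 + z.2) * (lam * z.1 * z.2) := by ring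
      calc ‖lam‖ * ‖z.1‖ ^ 3 = ‖lam * z.1 ^ 3‖ := by rw [norm_mul, norm_pow]
        _ = ‖lam * z.1 * (z.1 ^ 2 + t * z.1 * z.2 + z.2 ^ 2)
              - (t * z.1 + z.2) * (lam * z.1 * z.2)‖ := by rw [hid]
        _ ≤ ‖lam * z.1 * (z.1 ^ 2 + t * z.1 * z.2 + z.2 ^ 2)‖
              + ‖(t * z.1 + z.2) * (lam * z.1 * z.2)‖ := norm_sub_le _ _
        _ ≤ ‖lam‖ * ‖z‖ * M + (A + 1) * ‖z‖ * M := add_le_add e1 e2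
        _ = (‖lam‖ + A + 1) * ‖z‖ * M := by ring
    have est2 : ‖lam‖ * ‖z.2‖ ^ 3 ≤ (‖lam‖ + A + 1) * ‖z‖ * M := by
      have hid : lam * z.2 ^ 3 =
          lam * z.2 * (z.1 ^ 2 + t * z.1 * z.2 + z.2 ^ 2)
            - (z.1 + t * z.2) * (lam * z.1 * z.2) := by ring
      calc ‖lam‖ * ‖z.2‖ ^ 3 = ‖lam * z.2 ^ 3‖ := by rw [norm_mul, norm_pow]
        _ = ‖lam * z.2 * (z.1 ^ 2 + t * z.1 * z.2 + z.2 ^ 2)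
              - (z.1 + t * z.2) * (lam * z.1 * z.2)‖ := by rw [hid]
        _ ≤ ‖lam * z.2 * (z.1 ^ 2 + t * z.1 * z.2 + z.2 ^ 2)‖
              + ‖(z.1 + t * z.2) * (lam * z.1 * z.2)‖ := norm_sub_le _ _
        _ ≤ ‖lam‖ * ‖z‖ * M + (A + 1) * ‖z‖ * M := add_le_add e1' e2'
        _ = (‖lam‖ + A + 1) * ‖z‖ * M := by ring
    have hmax : ‖z‖ = ‖z.1‖ ∨ ‖z‖ = ‖z.2‖ := by
      rw [Prod.norm_def]; exact max_choice _ _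
    have key : ‖lam‖ * ‖z‖ ^ 3 ≤ (‖lam‖ + 2) * A * (‖z‖ * M) := by
      rcases hmax with h | h
      · rw [h] at est1 ⊢
        nlinarith [est1, mul_nonneg (mul_nonneg (by positivity : (0:ℝ) ≤ ‖lam‖ + 1)
          (sub_nonneg.mpr ht)) (mul_nonneg (norm_nonneg z.1) hM0)]
      · rw [h] at est2 ⊢
        nlinarith [est2, mul_nonneg (mul_nonneg (by positivity : (0:ℝ) ≤ ‖lam‖ + 1)
          (sub_nonneg.mpr ht)) (mul_nonneg (norm_nonneg z.2) hM0)]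
    have hrw : ‖lam‖ / (‖lam‖ + 2) * A⁻¹ * ‖z‖ ^ 2
        = ‖lam‖ * ‖z‖ ^ 2 / ((‖lam‖ + 2) * A) := by
      field_simp
    rw [hrw, div_le_iff₀ (by positivity)]
    nlinarith [key, hz0]
  · -- upper bound
    have hup1 : ‖lam * z.1 * z.2‖ ≤ (‖lam‖ + 3) * A * ‖z‖ ^ 2 := by
      rw [norm_mul, norm_mul]
      have hzz : ‖z.1‖ * ‖z.2‖ ≤ ‖z‖ ^ 2 := by
        calc ‖z.1‖ * ‖z.2‖ ≤ ‖z‖ * ‖z‖ := mul_le_mul h1 h2 (norm_nonneg _) (norm_nonneg _)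
          _ = ‖z‖ ^ 2 := (sq ‖z‖).symm
      nlinarith [hzz, hl0, mul_nonneg (mul_nonneg (by positivity : (0:ℝ) ≤ ‖lam‖ + 3)
        (sub_nonneg.mpr ht)) (sq_nonneg ‖z‖), mul_nonneg hl0.le (sub_nonneg.mpr hzz)]
    have hup2 : ‖z.1 ^ 2 + t * z.1 * z.2 + z.2 ^ 2‖ ≤ (‖lam‖ + 3) * A * ‖z‖ ^ 2 := by
      calc ‖z.1 ^ 2 + t * z.1 * z.2 + z.2 ^ 2‖
          ≤ ‖z.1 ^ 2 + t * z.1 * z.2‖ + ‖z.2 ^ 2‖ := norm_add_le _ _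
        _ ≤ ‖z.1 ^ 2‖ + ‖t * z.1 * z.2‖ + ‖z.2 ^ 2‖ := by
            have := norm_add_le (z.1 ^ 2) (t * z.1 * z.2); linarith
        _ = ‖z.1‖ ^ 2 + A * ‖z.1‖ * ‖z.2‖ + ‖z.2‖ ^ 2 := by
            rw [norm_pow, norm_pow, norm_mul, norm_mul, htn]
        _ ≤ (‖lam‖ + 3) * A * ‖z‖ ^ 2 := by
            have hzz : ‖z.1‖ * ‖z.2‖ ≤ ‖z‖ ^ 2 := by
              calc ‖z.1‖ * ‖z.2‖ ≤ ‖z‖ * ‖z‖ :=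
                    mul_le_mul h1 h2 (norm_nonneg _) (norm_nonneg _)
                _ = ‖z‖ ^ 2 := (sq ‖z‖).symm
            have hq1 : ‖z.1‖ ^ 2 ≤ ‖z‖ ^ 2 := by nlinarith [norm_nonneg z.1]
            have hq2 : ‖z.2‖ ^ 2 ≤ ‖z‖ ^ 2 := by nlinarith [norm_nonneg z.2]
            nlinarith [hq1, hq2, hzz, mul_nonneg (sub_nonneg.mpr ht) (sub_nonneg.mpr hzz),
              mul_nonneg (sub_nonneg.mpr ht) (sq_nonneg ‖z‖),
              mul_nonneg (mul_nonneg hl0.le hA0.le) (sq_nonneg ‖z‖)]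
    have : M = max ‖lam * z.1 * z.2‖ ‖z.1 ^ 2 + t * z.1 * z.2 + z.2 ^ 2‖ :=
      Prod.norm_def _
    rw [hMdef] at *
    rw [this]
    exact max_le hup1 hup2

set_option maxHeartbeats 1000000 in
lemma aux_escape (lam t : ℂ) (c C : ℝ) (hc : 0 < c) (hc1 : c ≤ 1) (hC1 : 1 ≤ C)
    (hb : ∀ z : ℂ × ℂ, z ≠ 0 →
      c * (‖t‖)⁻¹ * ‖z‖ ^ 2 ≤ ‖Fh lam t z‖ ∧
      ‖Fh lam t z‖ ≤ C * ‖t‖ * ‖z‖ ^ 2)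
    (z0 : ℂ × ℂ) (hz0 : ‖z0‖ = 1) (H : ℝ)
    (hH : Tendsto (fun n : ℕ => Real.log ‖(Fh lam t)^[n] z0‖ / 2 ^ n) atTop (𝓝 H))
    (ht : max 2 (max C c⁻¹) ≤ ‖t‖) :
    |H| ≤ 3 * Real.log (‖t‖) := by
  set A := ‖t‖ with hAdef
  have hA2 : (2:ℝ) ≤ A := le_trans (le_max_left _ _) ht
  have hA1 : (1:ℝ) ≤ A := by linarith
  have hA0 : (0:ℝ) < A := by linarith
  have hCA : C ≤ A := le_trans (le_trans (le_max_left _ _) (le_max_right _ _)) ht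
  have hcA : c⁻¹ ≤ A := le_trans (le_trans (le_max_right _ _) (le_max_right _ _)) ht
  have hC0 : (0:ℝ) < C := lt_of_lt_of_le one_pos hC1
  set L := Real.log (C * A) with hL
  set K := Real.log A - Real.log c with hK
  have hlogA : 0 ≤ Real.log A := Real.log_nonneg hA1
  have hlogc : Real.log c ≤ 0 := Real.log_nonpos hc.le hc1
  have hL0 : 0 ≤ L := Real.log_nonneg (by nlinarith)
  have hK0 : 0 ≤ K := by simp only [hK]; linarith
  have main : ∀ n : ℕ, (Fh lam t)^[n] z0 ≠ 0 ∧
      Real.log ‖(Fh lam t)^[n] z0‖ ≤ ((2:ℝ) ^ n - 1) * L ∧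
      -(((2:ℝ) ^ n - 1) * K) ≤ Real.log ‖(Fh lam t)^[n] z0‖ := by
    intro n
    induction n with
    | zero =>
      refine ⟨?_, ?_, ?_⟩
      · intro h
        rw [Function.iterate_zero_apply] at h
        rw [h] at hz0
        simp at hz0
      · simp [hz0]
      · simp [hz0]
    | succ n ih =>
      obtain ⟨hne, hub, hlb⟩ := ih
      obtain ⟨hlow, hup⟩ := hb _ hne
      have hM0 : (0:ℝ) < ‖(Fh lam t)^[n] z0‖ := norm_pos_iff.mpr hne
      have hnext : (Fh lam t)^[n+1] z0 = Fh lam t ((Fh lam t)^[n] z0) :=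
        Function.iterate_succ_apply' _ _ _
      have hM1 : (0:ℝ) < ‖Fh lam t ((Fh lam t)^[n] z0)‖ :=
        lt_of_lt_of_le (by positivity) hlow
      have hnz : (Fh lam t)^[n+1] z0 ≠ 0 := by
        rw [hnext]; exact norm_pos_iff.mp hM1
      have hlogup : Real.log (C * A * ‖(Fh lam t)^[n] z0‖ ^ 2)
          = L + 2 * Real.log ‖(Fh lam t)^[n] z0‖ := by
        rw [Real.log_mul (by positivity) (by positivity), Real.log_pow]
        push_cast; ring
      have hlogdown : Real.log (c * A⁻¹ * ‖(Fh lam t)^[n] z0‖ ^ 2)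
          = -K + 2 * Real.log ‖(Fh lam t)^[n] z0‖ := by
        rw [Real.log_mul (by positivity) (by positivity),
          Real.log_mul (ne_of_gt hc) (by positivity), Real.log_inv, Real.log_pow]
        simp only [hK]; push_cast; ring
      have hup' : Real.log ‖(Fh lam t)^[n+1] z0‖
          ≤ L + 2 * Real.log ‖(Fh lam t)^[n] z0‖ := by
        rw [hnext, ← hlogup]
        exact Real.log_le_log hM1 hup
      have hlb' : -K + 2 * Real.log ‖(Fh lam t)^[n] z0‖
          ≤ Real.log ‖(Fh lam t)^[n+1] z0‖ := by
        rw [hnext, ← hlogdown]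
        exact Real.log_le_log (by positivity) hlow
      refine ⟨hnz, ?_, ?_⟩
      · have h2 : ((2:ℝ) ^ (n+1) - 1) = 2 * ((2:ℝ) ^ n - 1) + 1 := by ring
        rw [h2]; nlinarith [hub, hup']
      · have h2 : ((2:ℝ) ^ (n+1) - 1) = 2 * ((2:ℝ) ^ n - 1) + 1 := by ring
        rw [h2]; nlinarith [hlb, hlb']
  have hHub : H ≤ L := by
    refine le_of_tendsto hH (Eventually.of_forall fun n => ?_)
    have h2 : (0:ℝ) < 2 ^ n := by positivity
    rw [div_le_iff₀ h2]
    nlinarith [(main n).2.1, hL0, h2]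
  have hHlb : -K ≤ H := by
    refine ge_of_tendsto hH (Eventually.of_forall fun n => ?_)
    have h2 : (0:ℝ) < 2 ^ n := by positivity
    rw [le_div_iff₀ h2]
    nlinarith [(main n).2.2, hK0, h2]
  have hLle : L ≤ 3 * Real.log A := by
    have : L = Real.log C + Real.log A := Real.log_mul (ne_of_gt hC0) (ne_of_gt hA0)
    have hlc : Real.log C ≤ Real.log A := Real.log_le_log hC0 hCA
    linarith
  have hKle : K ≤ 3 * Real.log A := by
    have hlc : Real.log c⁻¹ ≤ Real.log A := Real.log_le_log (by positivity) hcA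
    rw [Real.log_inv] at hlc
    simp only [hK]; linarith
  rw [abs_le]
  constructor <;> linarith

/-- For each `λ ≠ 0` there are constants `c, C > 0` with
`c |t|⁻¹ ‖z‖² ≤ ‖F_{λ,t}(z)‖ ≤ C |t| ‖z‖²` for all `|t| ≥ 1` and `z ≠ 0`
(the norm on `ℂ²` being the sup norm `‖(a,b)‖ = max (|a|, |b|)`).
Consequently the escape rates `H⁺_λ(t) = lim 2⁻ⁿ log ‖F_{λ,t}ⁿ(1,1)‖` and
`H⁻_λ(t) = lim 2⁻ⁿ log ‖F_{λ,t}ⁿ(-1,1)‖` satisfy `|H^±_λ(t)| ≤ 3 log |t|`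
for all `t` with `|t| ≥ R`, for some `R > 1`; in particular
`H^±_λ(t) = O(log |t|)` as `t → ∞`. -/
theorem escape_rate_log_bound (lam : ℂ) (hlam : lam ≠ 0) (Hp Hm : ℂ → ℝ)
    (hHp : ∀ t : ℂ, Tendsto (fun n : ℕ => Real.log ‖(Fh lam t)^[n] (1, 1)‖ / 2 ^ n)
      atTop (𝓝 (Hp t)))
    (hHm : ∀ t : ℂ, Tendsto (fun n : ℕ => Real.log ‖(Fh lam t)^[n] (-1, 1)‖ / 2 ^ n)
      atTop (𝓝 (Hm t))) :
    (∃ c > (0 : ℝ), ∃ C > (0 : ℝ), ∀ t : ℂ, 1 ≤ ‖t‖ → ∀ z : ℂ × ℂ, z ≠ 0 →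
      c * (‖t‖)⁻¹ * ‖z‖ ^ 2 ≤ ‖Fh lam t z‖ ∧
        ‖Fh lam t z‖ ≤ C * ‖t‖ * ‖z‖ ^ 2) ∧
    ∃ R > (1 : ℝ), ∀ t : ℂ, R ≤ ‖t‖ →
      |Hp t| ≤ 3 * Real.log (‖t‖) ∧ |Hm t| ≤ 3 * Real.log (‖t‖) := by
  have hl0 : (0:ℝ) < ‖lam‖ := norm_pos_iff.mpr hlam
  set c : ℝ := ‖lam‖ / (‖lam‖ + 2) with hcdef
  set C : ℝ := ‖lam‖ + 3 with hCdef
  have hc : 0 < c := by positivity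
  have hc1 : c ≤ 1 := by rw [hcdef, div_le_one (by positivity)]; linarith
  have hC1 : (1:ℝ) ≤ C := by rw [hCdef]; linarith
  constructor
  · exact ⟨c, hc, C, by positivity, fun t ht z hz => Fh_bounds lam hlam t ht z hz⟩
  · refine ⟨max 2 (max C c⁻¹), lt_of_lt_of_le one_lt_two (le_max_left _ _), fun t ht => ?_⟩
    have ht1 : (1:ℝ) ≤ ‖t‖ :=
      le_trans (le_trans one_le_two (le_max_left _ _)) ht
    have hb : ∀ z : ℂ × ℂ, z ≠ 0 →
        c * (‖t‖)⁻¹ * ‖z‖ ^ 2 ≤ ‖Fh lam t z‖ ∧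
        ‖Fh lam t z‖ ≤ C * ‖t‖ * ‖z‖ ^ 2 :=
      fun z hz => Fh_bounds lam hlam t ht1 z hz
    have hn1 : ‖((1:ℂ), (1:ℂ))‖ = 1 := by simp [Prod.norm_def]
    have hn2 : ‖((-1:ℂ), (1:ℂ))‖ = 1 := by simp [Prod.norm_def]
    exact ⟨aux_escape lam t c C hc hc1 hC1 hb _ hn1 _ (hHp t) ht,
      aux_escape lam t c C hc hc1 hC1 hb _ hn2 _ (hHm t) ht⟩
end
end

section
/- For every λ ∈ ℂ ∖ {0}: H⁺_λ(λ − 2) = log|λ|, and H⁻_λ(λ − 2) = (1/2)·G_M(λ/2 − λ²/4) + log 2. -/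
open Filter Topology

noncomputable section

/-- The key algebraic step: `F_{λ,λ-2}` acts on points of the form
`k·(q/λ - 1/2, q/λ + 1/2)` by `q ↦ q² + c`, `k ↦ k²`, `c = λ/2 - λ²/4`. -/
lemma Fh_step (lam : ℂ) (hlam : lam ≠ 0) (k q : ℂ) :
    Fh lam (lam - 2) (k * (q / lam - 1 / 2), k * (q / lam + 1 / 2)) =
      (k * k * ((q ^ 2 + (lam / 2 - lam ^ 2 / 4)) / lam - 1 / 2),
       k * k * ((q ^ 2 + (lam / 2 - lam ^ 2 / 4)) / lam + 1 / 2)) := by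
  have hl : lam * lam⁻¹ = 1 := mul_inv_cancel₀ hlam
  simp only [Fh, Prod.mk.injEq, div_eq_mul_inv]
  constructor <;>
    linear_combination (4⁻¹ * k ^ 2 * (4 * q ^ 2 - lam ^ 2) * lam⁻¹
      + (lam * k ^ 2 / 4) * (lam * lam⁻¹) + lam * k ^ 2 / 4 - k ^ 2 / 2) * hl

/-- Auxiliary: `r / 2^(n+1) → 0`. -/
lemma aux_div_pow_tendsto_zero (r : ℝ) :
    Tendsto (fun n : ℕ => r / 2 ^ (n + 1)) atTop (𝓝 0) := by
  have h0 := tendsto_pow_atTop_nhds_zero_of_lt_one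
    (by norm_num : (0:ℝ) ≤ 1/2) (by norm_num : (1/2:ℝ) < 1)
  have h1 := h0.const_mul (r / 2)
  have he : (fun n : ℕ => r / 2 ^ (n + 1)) = fun n : ℕ => (r / 2) * (1 / 2 : ℝ) ^ n := by
    funext n
    rw [one_div, inv_pow, pow_succ]
    ring
  rw [he]
  simpa using h1

/-- For every `λ ≠ 0`: `H⁺_λ(λ-2) = log |λ|` and
`H⁻_λ(λ-2) = (1/2)·G_M(λ/2 - λ²/4) + log 2`, where `H^±_λ` are the escape
rates of the critical points `±1` and `G_M(c) = lim 2⁻ⁿ log⁺ |p_cⁿ(c)|`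
(with `p_c(z) = z² + c`) is the Green's function of the Mandelbrot set. -/
theorem escape_rates_at_polynomial_parameter (lam : ℂ) (hlam : lam ≠ 0)
    (Hp Hm : ℂ → ℝ) (GM : ℂ → ℝ)
    (hHp : ∀ t : ℂ, Tendsto (fun n : ℕ => Real.log ‖(Fh lam t)^[n] (1, 1)‖ / 2 ^ n)
      atTop (𝓝 (Hp t)))
    (hHm : ∀ t : ℂ, Tendsto (fun n : ℕ => Real.log ‖(Fh lam t)^[n] (-1, 1)‖ / 2 ^ n)
      atTop (𝓝 (Hm t)))
    (hGM : ∀ c : ℂ, Tendsto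
      (fun n : ℕ => Real.log (max ‖(fun z : ℂ => z ^ 2 + c)^[n] c‖ 1) / 2 ^ n)
      atTop (𝓝 (GM c))) :
    Hp (lam - 2) = Real.log ‖lam‖ ∧
      Hm (lam - 2) = (1 / 2) * GM (lam / 2 - lam ^ 2 / 4) + Real.log 2 := by
  have hal : 0 < ‖lam‖ := by
    exact norm_pos_iff.mpr hlam
  constructor
  · -- the plus critical point
    have key : ∀ n : ℕ, (Fh lam (lam - 2))^[n] (1, 1)
        = (lam ^ (2 ^ n - 1), lam ^ (2 ^ n - 1)) := by
      intro n
      induction n with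
      | zero => simp
      | succ n ih =>
        rw [Function.iterate_succ_apply', ih]
        have h2 : 2 ^ (n + 1) - 1 = (2 ^ n - 1) + (2 ^ n - 1) + 1 := by
          have := Nat.one_le_two_pow (n := n); omega
        rw [h2]
        simp only [Fh, Prod.mk.injEq]
        constructor <;> ring
    have heq : (fun n : ℕ => Real.log ‖(Fh lam (lam - 2))^[n] (1, 1)‖ / 2 ^ n)
        = fun n : ℕ => ((2 ^ n - 1 : ℕ) : ℝ) * Real.log (‖lam‖) / 2 ^ n := by
      funext n
      rw [key n, Prod.norm_def]
      simp [map_pow, Real.log_pow]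
    have hlim : Tendsto (fun n : ℕ => ((2 ^ n - 1 : ℕ) : ℝ) * Real.log (‖lam‖) / 2 ^ n)
        atTop (𝓝 (Real.log (‖lam‖))) := by
      set L := Real.log (‖lam‖)
      have h : (fun n : ℕ => ((2 ^ n - 1 : ℕ) : ℝ) * L / 2 ^ n)
          = fun n : ℕ => L - L * (1 / 2 : ℝ) ^ n := by
        funext n
        have h1 : ((2 ^ n - 1 : ℕ) : ℝ) = 2 ^ n - 1 := by
          have := Nat.one_le_two_pow (n := n); push_cast [this]; ring
        have h2 : (2 : ℝ) ^ n ≠ 0 := by positivity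
        rw [h1, one_div, inv_pow]; field_simp
      rw [h]
      have h0 := tendsto_pow_atTop_nhds_zero_of_lt_one
        (by norm_num : (0:ℝ) ≤ 1/2) (by norm_num : (1/2:ℝ) < 1)
      have h3 := (tendsto_const_nhds (x := L) (f := atTop (α := ℕ))).sub (h0.const_mul L)
      simpa using h3
    exact tendsto_nhds_unique (hHp (lam - 2)) (heq ▸ hlim)
  · -- the minus critical point
    set c : ℂ := lam / 2 - lam ^ 2 / 4 with hc
    set P : ℕ → ℂ := fun n => (fun z : ℂ => z ^ 2 + c)^[n] c with hP
    -- the explicit form of the iterates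
    have key2 : ∀ n : ℕ, (Fh lam (lam - 2))^[n + 1] (-1, 1)
        = ((2 : ℂ) ^ 2 ^ (n + 1) * (P n / lam - 1 / 2),
           (2 : ℂ) ^ 2 ^ (n + 1) * (P n / lam + 1 / 2)) := by
      intro n
      induction n with
      | zero =>
        have hl : lam * lam⁻¹ = 1 := mul_inv_cancel₀ hlam
        simp only [zero_add, Function.iterate_one, Function.iterate_zero, id_eq, hP, hc,
          Fh, Prod.mk.injEq, div_eq_mul_inv]
        constructor <;> linear_combination (lam - 2) * hl
      | succ n ih =>
        rw [show n + 1 + 1 = (n + 1) + 1 from rfl, Function.iterate_succ_apply', ih,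
          Fh_step lam hlam]
        have hk : (2 : ℂ) ^ 2 ^ (n + 1) * (2 : ℂ) ^ 2 ^ (n + 1) = (2 : ℂ) ^ 2 ^ (n + 1 + 1) := by
          rw [← pow_add]; ring_nf
        have hPs : P (n + 1) = P n ^ 2 + c := by
          simp only [hP, Function.iterate_succ_apply']
        rw [hk, hPs]
    set M : ℕ → ℝ := fun n => max ‖P n / lam - 1 / 2‖ ‖P n / lam + 1 / 2‖ with hM
    set N : ℕ → ℝ := fun n => max (‖P n‖) 1 with hN
    have hN1 : ∀ n, 1 ≤ N n := fun n => le_max_right _ _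
    have hNpos : ∀ n, 0 < N n := fun n => lt_of_lt_of_le one_pos (hN1 n)
    have hMhalf : ∀ n, (1:ℝ)/2 ≤ M n := by
      intro n
      have h1 : (1:ℝ) = ‖(P n / lam + 1/2) - (P n / lam - 1/2)‖ := by
        norm_num
      have h2 : ‖(P n / lam + 1/2) - (P n / lam - 1/2)‖
          ≤ ‖P n / lam + 1/2‖ + ‖P n / lam - 1/2‖ := norm_sub_le _ _
      have h3 : ‖P n / lam + 1/2‖ ≤ M n := le_max_right _ _
      have h4 : ‖P n / lam - 1/2‖ ≤ M n := le_max_left _ _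
      linarith
    have hMq : ∀ n, ‖P n‖ / ‖lam‖ ≤ M n := by
      intro n
      have h1 : ‖(P n / lam - 1/2) + (P n / lam + 1/2)‖
          ≤ ‖P n / lam - 1/2‖ + ‖P n / lam + 1/2‖ := norm_add_le _ _
      have h2 : ‖(P n / lam - 1/2) + (P n / lam + 1/2)‖ = 2 * ‖P n / lam‖ := by
        have : (P n / lam - 1/2) + (P n / lam + 1/2) = 2 * (P n / lam) := by ring
        rw [this, norm_mul]
        norm_num
      have h3 : ‖P n / lam‖ = ‖P n‖ / ‖lam‖ := by
        rw [norm_div]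
      have h4 : ‖P n / lam - 1/2‖ ≤ M n := le_max_left _ _
      have h5 : ‖P n / lam + 1/2‖ ≤ M n := le_max_right _ _
      linarith [h2 ▸ h1, h3]
    have hMpos : ∀ n, 0 < M n := fun n => lt_of_lt_of_le (by norm_num) (hMhalf n)
    set A : ℝ := min (‖lam‖)⁻¹ (1/2) with hA
    set B : ℝ := (‖lam‖)⁻¹ + 1/2 with hB
    have hApos : 0 < A := lt_min (inv_pos.mpr hal) (by norm_num)
    have hBpos : 0 < B := by positivity
    have hlow : ∀ n, A * N n ≤ M n := by
      intro n
      rcases le_total 1 (‖P n‖) with h | h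
      · have hNn : N n = ‖P n‖ := max_eq_left h
        rw [hNn]
        calc A * ‖P n‖ ≤ (‖lam‖)⁻¹ * ‖P n‖ := by
              apply mul_le_mul_of_nonneg_right (min_le_left _ _) (by positivity)
          _ = ‖P n‖ / ‖lam‖ := by rw [div_eq_inv_mul]
          _ ≤ M n := hMq n
      · have hNn : N n = 1 := max_eq_right h
        rw [hNn, mul_one]
        exact le_trans (min_le_right _ _) (hMhalf n)
    have hup : ∀ n, M n ≤ B * N n := by
      intro n
      have h3 : ‖P n / lam‖ = ‖P n‖ / ‖lam‖ := by
        rw [norm_div]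
      have hb1 : ‖P n / lam - 1/2‖ ≤ ‖P n / lam‖ + 1/2 := by
        have := norm_sub_le (P n / lam) (1/2 : ℂ)
        simpa using this
      have hb2 : ‖P n / lam + 1/2‖ ≤ ‖P n / lam‖ + 1/2 := by
        have := norm_add_le (P n / lam) (1/2 : ℂ)
        simpa using this
      have hMle : M n ≤ ‖P n / lam‖ + 1/2 := max_le hb1 hb2
      have h6 : ‖P n‖ ≤ N n := le_max_left _ _
      have h7 : ‖P n‖ / ‖lam‖ ≤ (‖lam‖)⁻¹ * N n := by
        rw [div_eq_inv_mul]
        exact mul_le_mul_of_nonneg_left h6 (by positivity)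
      have h8 : (1:ℝ)/2 ≤ (1/2) * N n := by
        nlinarith [hN1 n]
      calc M n ≤ ‖P n / lam‖ + 1/2 := hMle
        _ = ‖P n‖ / ‖lam‖ + 1/2 := by rw [h3]
        _ ≤ (‖lam‖)⁻¹ * N n + (1/2) * N n := by linarith
        _ = B * N n := by rw [hB]; ring
    -- log bounds
    have hloglow : ∀ n, Real.log A + Real.log (N n) ≤ Real.log (M n) := by
      intro n
      have := Real.log_le_log (by positivity : (0:ℝ) < A * N n) (hlow n)
      rwa [Real.log_mul (ne_of_gt hApos) (ne_of_gt (hNpos n))] at this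
    have hlogup : ∀ n, Real.log (M n) ≤ Real.log B + Real.log (N n) := by
      intro n
      have := Real.log_le_log (hMpos n) (hup n)
      rwa [Real.log_mul (ne_of_gt hBpos) (ne_of_gt (hNpos n))] at this
    -- limits
    have hNlim : Tendsto (fun n : ℕ => Real.log (N n) / 2 ^ n) atTop (𝓝 (GM c)) := hGM c
    have hNlim2 : Tendsto (fun n : ℕ => Real.log (N n) / 2 ^ (n + 1))
        atTop (𝓝 ((1/2) * GM c)) := by
      have he : (fun n : ℕ => Real.log (N n) / 2 ^ (n + 1))
          = fun n : ℕ => (1/2) * (Real.log (N n) / 2 ^ n) := by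
        funext n
        rw [pow_succ]
        ring
      rw [he]
      exact hNlim.const_mul (1/2)
    have hMlim : Tendsto (fun n : ℕ => Real.log (M n) / 2 ^ (n + 1))
        atTop (𝓝 ((1/2) * GM c)) := by
      have hlo : Tendsto (fun n : ℕ => Real.log A / 2 ^ (n + 1) + Real.log (N n) / 2 ^ (n + 1))
          atTop (𝓝 (0 + (1/2) * GM c)) := (aux_div_pow_tendsto_zero _).add hNlim2
      have hhi : Tendsto (fun n : ℕ => Real.log B / 2 ^ (n + 1) + Real.log (N n) / 2 ^ (n + 1))
          atTop (𝓝 (0 + (1/2) * GM c)) := (aux_div_pow_tendsto_zero _).add hNlim2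
      rw [zero_add] at hlo hhi
      apply tendsto_of_tendsto_of_tendsto_of_le_of_le hlo hhi
      · intro n
        dsimp only
        rw [← add_div]
        exact div_le_div_of_nonneg_right (hloglow n) (by positivity)
      · intro n
        dsimp only
        rw [← add_div]
        exact div_le_div_of_nonneg_right (hlogup n) (by positivity)
    -- shifted sequence
    have hshift : Tendsto (fun n : ℕ =>
        Real.log ‖(Fh lam (lam - 2))^[n + 1] (-1, 1)‖ / 2 ^ (n + 1))
        atTop (𝓝 (Hm (lam - 2))) := by
      exact (hHm (lam - 2)).comp (tendsto_add_atTop_nat 1)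
    have heq2 : (fun n : ℕ => Real.log ‖(Fh lam (lam - 2))^[n + 1] (-1, 1)‖ / 2 ^ (n + 1))
        = fun n : ℕ => Real.log 2 + Real.log (M n) / 2 ^ (n + 1) := by
      funext n
      have hnval : ‖(Fh lam (lam - 2))^[n + 1] (-1, 1)‖ = (2:ℝ) ^ 2 ^ (n + 1) * M n := by
        rw [key2 n, Prod.norm_def]
        have hnn : ‖(2:ℂ) ^ 2 ^ (n + 1)‖ = (2:ℝ) ^ 2 ^ (n + 1) := by
          rw [norm_pow]
          norm_num
        simp only [norm_mul, hnn]
        rw [← mul_max_of_nonneg _ _ (by positivity : (0:ℝ) ≤ (2:ℝ) ^ 2 ^ (n + 1))]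
      rw [hnval, Real.log_mul (by positivity) (ne_of_gt (hMpos n)), Real.log_pow, add_div]
      congr 1
      · push_cast
        rw [mul_comm, mul_div_assoc, div_self (by positivity : ((2:ℝ) ^ (n + 1)) ≠ 0), mul_one]
    have hfinal : Tendsto (fun n : ℕ => Real.log 2 + Real.log (M n) / 2 ^ (n + 1))
        atTop (𝓝 (Real.log 2 + (1/2) * GM c)) := hMlim.const_add (Real.log 2)
    have := tendsto_nhds_unique hshift (heq2 ▸ hfinal)
    rw [this]
    ring
end
end

section
/- For every real number c > 1/4, one has G_M(c) > log c. In fact G_M(c) ≥ (1/2) log(c² + c) > log c for all real c > 1/4. -/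
open Filter Topology

lemma real_iter_eq (c : ℝ) (n : ℕ) :
    (fun z : ℂ => z ^ 2 + (c : ℂ))^[n] (c : ℂ)
      = (((fun x : ℝ => x ^ 2 + c)^[n] c : ℝ) : ℂ) := by
  induction n with
  | zero => simp
  | succ n ih => rw [Function.iterate_succ_apply', Function.iterate_succ_apply', ih]; push_cast; ring

lemma iter_pos (c : ℝ) (hc : 0 < c) (n : ℕ) : 0 < (fun x : ℝ => x ^ 2 + c)^[n] c := by
  induction n with
  | zero => simpa
  | succ n ih =>
    rw [Function.iterate_succ_apply']
    positivity

lemma iter_ge (c : ℝ) (hc : 0 < c) (n : ℕ) :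
    (c ^ 2 + c) ^ (2 ^ n) ≤ (fun x : ℝ => x ^ 2 + c)^[n + 1] c := by
  induction n with
  | zero => simp [Function.iterate_succ_apply']
  | succ n ih =>
    rw [Function.iterate_succ_apply']
    have h1 : (0:ℝ) ≤ (c ^ 2 + c) ^ (2 ^ n) := by positivity
    calc (c ^ 2 + c) ^ 2 ^ (n + 1) = ((c ^ 2 + c) ^ (2 ^ n)) ^ 2 := by
          rw [pow_succ 2 n, pow_mul]
      _ ≤ ((fun x : ℝ => x ^ 2 + c)^[n + 1] c) ^ 2 := by
          apply pow_le_pow_left₀ h1 ih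
      _ ≤ _ := by simp; linarith

/-- For every real `c > 1/4` one has `G_M(c) ≥ (1/2) log(c² + c) > log c`,
where `G_M(c) = lim 2⁻ⁿ log⁺ |p_cⁿ(c)|` (with `p_c(z) = z² + c`) is the
Green's function of the Mandelbrot set. -/
theorem green_function_bound_on_real_axis (GM : ℂ → ℝ)
    (hGM : ∀ c : ℂ, Tendsto
      (fun n : ℕ => Real.log (max ‖(fun z : ℂ => z ^ 2 + c)^[n] c‖ 1) / 2 ^ n)
      atTop (𝓝 (GM c))) :
    ∀ c : ℝ, 1 / 4 < c →
      (1 / 2) * Real.log (c ^ 2 + c) ≤ GM (c : ℂ) ∧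
        Real.log c < (1 / 2) * Real.log (c ^ 2 + c) := by
  intro c hc
  have hc0 : 0 < c := by linarith
  have hcc : 0 < c ^ 2 + c := by positivity
  constructor
  · -- lower bound on GM
    have habs : ∀ n : ℕ, ‖((fun z : ℂ => z ^ 2 + (c : ℂ))^[n] (c : ℂ))‖
        = (fun x : ℝ => x ^ 2 + c)^[n] c := by
      intro n
      rw [real_iter_eq, Complex.norm_real, Real.norm_eq_abs, abs_of_pos (iter_pos c hc0 n)]
    rcases le_or_gt (c ^ 2 + c) 1 with h1 | h1
    · -- log(c²+c) ≤ 0, and GM ≥ 0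
      have hlog : Real.log (c ^ 2 + c) ≤ 0 := Real.log_nonpos (le_of_lt hcc) h1
      have hGM0 : 0 ≤ GM (c : ℂ) := by
        refine ge_of_tendsto (hGM c) (Eventually.of_forall fun n => ?_)
        have : (0:ℝ) ≤ Real.log (max ‖((fun z : ℂ => z ^ 2 + (c:ℂ))^[n] (c:ℂ))‖ 1) :=
          Real.log_nonneg (le_max_right _ _)
        positivity
      nlinarith
    · -- main case
      refine ge_of_tendsto (hGM c) ?_
      filter_upwards [eventually_ge_atTop 1] with n hn
      obtain ⟨m, rfl⟩ := Nat.exists_eq_add_of_le' hn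
      have hpow : (c ^ 2 + c) ^ (2 ^ m) ≤ (fun x : ℝ => x ^ 2 + c)^[m + 1] c := iter_ge c hc0 m
      have hlog : (2 ^ m : ℝ) * Real.log (c ^ 2 + c)
          ≤ Real.log (max ‖((fun z : ℂ => z ^ 2 + (c:ℂ))^[m+1] (c:ℂ))‖ 1) := by
        rw [habs]
        calc (2 ^ m : ℝ) * Real.log (c ^ 2 + c) = Real.log ((c ^ 2 + c) ^ (2 ^ m)) := by
              rw [Real.log_pow]; push_cast; ring
          _ ≤ Real.log ((fun x : ℝ => x ^ 2 + c)^[m + 1] c) := by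
              apply Real.log_le_log (by positivity) hpow
          _ ≤ _ := Real.log_le_log (iter_pos c hc0 _) (le_max_left _ _)
      have hp : (0:ℝ) < 2 ^ (m + 1) := by positivity
      rw [le_div_iff₀ hp]
      calc (1:ℝ) / 2 * Real.log (c ^ 2 + c) * 2 ^ (m + 1)
          = (2 ^ m : ℝ) * Real.log (c ^ 2 + c) := by ring
        _ ≤ _ := hlog
  · -- log c < (1/2) log(c²+c)
    have : Real.log (c ^ 2) < Real.log (c ^ 2 + c) :=
      Real.log_lt_log (by positivity) (by linarith)
    rw [Real.log_pow] at this
    push_cast at this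
    linarith
end

section
/- Let λ ∈ ℂ with |λ| = 2 and Re λ < 1, and set c(λ) = λ/2 − λ²/4. Then c(λ) belongs to the Mandelbrot set M if and only if λ = −2. Equivalently, for all such λ with λ ≠ −2 one has |p_{c(λ)}²(0)| = |c(λ)(c(λ)+1)| > 2. -/
/-- The Mandelbrot set: `M = {c ∈ ℂ : |p_cⁿ(0)| ≤ 2 for all n ≥ 1}`, where
`p_c(z) = z² + c`. -/
def Mandelbrot : Set ℂ :=
  {c : ℂ | ∀ n : ℕ, 1 ≤ n → ‖(fun z : ℂ => z ^ 2 + c)^[n] 0‖ ≤ 2}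

/-- Let `λ ∈ ℂ` with `|λ| = 2` and `Re λ < 1`, and set `c(λ) = λ/2 - λ²/4`.
Then `c(λ)` lies in the Mandelbrot set if and only if `λ = -2`; equivalently,
for all such `λ ≠ -2` one has `|p_{c(λ)}²(0)| = |c(λ)(c(λ)+1)| > 2`. -/
theorem c_lambda_in_Mandelbrot_iff (lam : ℂ) (habs : ‖lam‖ = 2)
    (hre : lam.re < 1) :
    ((lam / 2 - lam ^ 2 / 4) ∈ Mandelbrot ↔ lam = -2) ∧
      (lam ≠ -2 →
        2 < ‖(lam / 2 - lam ^ 2 / 4) * ((lam / 2 - lam ^ 2 / 4) + 1)‖) := by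
  have h4 : lam.re ^ 2 + lam.im ^ 2 = 4 := by
    have h := Complex.sq_norm lam
    rw [habs, Complex.normSq_apply] at h
    nlinarith [h]
  have key : lam ≠ -2 →
      2 < ‖(lam / 2 - lam ^ 2 / 4) * ((lam / 2 - lam ^ 2 / 4) + 1)‖ := by
    intro hne
    have hxge : (-2 : ℝ) ≤ lam.re := by nlinarith [sq_nonneg lam.im]
    have hxgt : (-2 : ℝ) < lam.re := by
      rcases eq_or_lt_of_le hxge with h | h
      · exfalso
        have him : lam.im = 0 := by nlinarith
        exact hne (Complex.ext (by simp [← h]) (by simp [him]))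
      · exact h
    have hns : Complex.normSq ((lam / 2 - lam ^ 2 / 4) * ((lam / 2 - lam ^ 2 / 4) + 1))
        = (2 - lam.re) * (5 - lam.re ^ 2) := by
      rw [show (lam / 2 - lam ^ 2 / 4) * ((lam / 2 - lam ^ 2 / 4) + 1)
          = lam * (2 - lam) * (4 + 2 * lam - lam ^ 2) / 16 by ring]
      rw [map_div₀, map_mul, map_mul]
      have h1 : Complex.normSq lam = 4 := by
        rw [Complex.normSq_eq_norm_sq, habs]; norm_num
      have h2 : Complex.normSq (2 - lam) = 8 - 4 * lam.re := by
        simp only [Complex.normSq_apply, Complex.sub_re, Complex.sub_im,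
          Complex.re_ofNat, Complex.im_ofNat]
        linear_combination h4
      have h3 : Complex.normSq (4 + 2 * lam - lam ^ 2) = 16 + 16 * lam.im ^ 2 := by
        rw [show (4 + 2 * lam - lam ^ 2) = 4 + 2 * lam - lam * lam by ring]
        simp only [Complex.normSq_apply, Complex.add_re, Complex.add_im, Complex.sub_re,
          Complex.sub_im, Complex.mul_re, Complex.mul_im, Complex.re_ofNat, Complex.im_ofNat]
        linear_combination (lam.im ^ 2 + lam.re ^ 2 - 4 * lam.re) * h4
      have h16 : Complex.normSq 16 = 256 := by
        norm_num [Complex.normSq_apply]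
      rw [h1, h2, h3, h16]
      nlinarith [h4]
    have hnn := norm_nonneg ((lam / 2 - lam ^ 2 / 4) * ((lam / 2 - lam ^ 2 / 4) + 1))
    have hsq := Complex.sq_norm ((lam / 2 - lam ^ 2 / 4) * ((lam / 2 - lam ^ 2 / 4) + 1))
    nlinarith [hsq, hns, hnn]
  refine ⟨⟨?_, ?_⟩, key⟩
  · intro hM
    by_contra hne
    have h2 := key hne
    have hit : (fun z : ℂ => z ^ 2 + (lam / 2 - lam ^ 2 / 4))^[2] 0
        = (lam / 2 - lam ^ 2 / 4) * ((lam / 2 - lam ^ 2 / 4) + 1) := by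
      simp [Function.iterate_succ_apply']
      ring
    have := hM 2 (by norm_num)
    rw [hit] at this
    linarith
  · intro h
    subst h
    have hc : (-2 : ℂ) / 2 - (-2 : ℂ) ^ 2 / 4 = -2 := by norm_num
    rw [hc]
    intro n hn
    have hiter : ∀ k : ℕ, (fun z : ℂ => z ^ 2 + (-2))^[k + 2] 0 = 2 := by
      intro k
      induction k with
      | zero => norm_num [Function.iterate_succ_apply']
      | succ m ih =>
        rw [show m + 1 + 2 = (m + 2) + 1 by ring, Function.iterate_succ_apply', ih]
        norm_num
    match n, hn with
    | 1, _ => simp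
    | (k + 2), _ => rw [hiter k]; simp
end

section
/- Fix λ ∈ ℂ ∖ {0}. For every n ≥ 1, the polynomials P_n and Q_n have no common root in ℂ. If moreover 1 + λ + ⋯ + λ^j ≠ 0 for every integer j ≥ 1 (for instance if λ is not a root of unity), then deg P_n = 2^{n−1} − 1 and deg Q_n = 2^{n−1} for every n ≥ 1. -/
open Filter Topology

noncomputable section

open Polynomial in
/-- Fix `λ ≠ 0` and let `P_n, Q_n ∈ ℂ[t]` be the polynomials with
`F_{λ,t}ⁿ(1,1) = (P_n(t), Q_n(t))`.  For every `n ≥ 1` the polynomials `P_n`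
and `Q_n` have no common root in `ℂ`; and if moreover `1 + λ + ⋯ + λʲ ≠ 0`
for every `j ≥ 1` (e.g. if `λ` is not a root of unity), then
`deg P_n = 2^(n-1) - 1` and `deg Q_n = 2^(n-1)` for every `n ≥ 1`. -/
theorem Pn_Qn_coprime_and_degrees (lam : ℂ) (hlam : lam ≠ 0)
    (P Q : ℕ → Polynomial ℂ)
    (hPQ : ∀ (n : ℕ) (t : ℂ), (Fh lam t)^[n] (1, 1) = ((P n).eval t, (Q n).eval t)) :
    (∀ n : ℕ, 1 ≤ n → ∀ t : ℂ, ¬((P n).eval t = 0 ∧ (Q n).eval t = 0)) ∧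
      ((∀ j : ℕ, 1 ≤ j → ∑ i ∈ Finset.range (j + 1), lam ^ i ≠ 0) →
        ∀ n : ℕ, 1 ≤ n →
          (P n).natDegree = 2 ^ (n - 1) - 1 ∧ (Q n).natDegree = 2 ^ (n - 1)) := by
  -- Part 1 : the iterates never hit (0,0)
  have key : ∀ (t : ℂ) (n : ℕ), (Fh lam t)^[n] (1, 1) ≠ (0, 0) := by
    intro t n
    induction n with
    | zero => simp
    | succ n ih =>
      rw [Function.iterate_succ_apply']
      intro h
      set z := (Fh lam t)^[n] (1, 1) with hz
      have h1 : lam * z.1 * z.2 = 0 := congrArg Prod.fst h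
      have h2 : z.1 ^ 2 + t * z.1 * z.2 + z.2 ^ 2 = 0 := congrArg Prod.snd h
      have hz12 : z.1 = 0 ∨ z.2 = 0 := by
        rcases mul_eq_zero.1 h1 with h' | h'
        · rcases mul_eq_zero.1 h' with h' | h'
          · exact absurd h' hlam
          · exact Or.inl h'
        · exact Or.inr h'
      rcases hz12 with h' | h'
      · have h2' : z.2 = 0 := by
          rw [h'] at h2
          have : z.2 ^ 2 = 0 := by linear_combination h2
          exact pow_eq_zero_iff (n := 2) (by norm_num) |>.1 this
        exact ih (Prod.ext h' h2')
      · have h1' : z.1 = 0 := by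
          rw [h'] at h2
          have : z.1 ^ 2 = 0 := by linear_combination h2
          exact pow_eq_zero_iff (n := 2) (by norm_num) |>.1 this
        exact ih (Prod.ext h1' h')
  constructor
  · intro n _ t ⟨hp, hq⟩
    exact key t n (by rw [hPQ n t, hp, hq])
  -- Part 2 : the degrees
  intro hS
  -- the recursion for P and Q as polynomials
  have heval : ∀ (n : ℕ) (t : ℂ),
      (P (n+1)).eval t = lam * (P n).eval t * (Q n).eval t ∧
      (Q (n+1)).eval t = ((P n).eval t) ^ 2 + t * (P n).eval t * (Q n).eval t
          + ((Q n).eval t) ^ 2 := by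
    intro n t
    have h1 := hPQ (n+1) t
    rw [Function.iterate_succ_apply', hPQ n t] at h1
    simp only [Fh, Prod.ext_iff] at h1
    exact ⟨h1.1.symm, h1.2.symm⟩
  have hrecP : ∀ n, P (n+1) = C lam * P n * Q n := by
    intro n
    apply Polynomial.funext
    intro t
    simp [(heval n t).1]
  have hrecQ : ∀ n, Q (n+1) = (P n) ^ 2 + X * P n * Q n + (Q n) ^ 2 := by
    intro n
    apply Polynomial.funext
    intro t
    simp [(heval n t).2]
  have hP1 : P 1 = C lam := by
    apply Polynomial.funext
    intro t
    have h1 := hPQ 1 t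
    simp only [Function.iterate_one, Fh, Prod.ext_iff] at h1
    simp [← h1.1]
  have hQ1 : Q 1 = X + C 2 := by
    apply Polynomial.funext
    intro t
    have h1 := hPQ 1 t
    simp only [Function.iterate_one, Fh, Prod.ext_iff] at h1
    simp [← h1.2]
    ring
  -- main induction
  have main : ∀ m : ℕ,
      (P (m+1)).natDegree = 2 ^ m - 1 ∧ (Q (m+1)).natDegree = 2 ^ m ∧
      (Q (m+1)).leadingCoeff ≠ 0 ∧
      (∑ i ∈ Finset.range (m+1), lam ^ i) * (P (m+1)).leadingCoeff
        = lam ^ (m+1) * (Q (m+1)).leadingCoeff := by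
    intro m
    induction m with
    | zero =>
      refine ⟨by simp [hP1], ?_, ?_, ?_⟩
      · rw [hQ1]; simpa using Polynomial.natDegree_X_add_C (2 : ℂ)
      · rw [hQ1]
        have : (X + C (2:ℂ)).Monic := Polynomial.monic_X_add_C 2
        simp [this.leadingCoeff]
      · rw [hP1, hQ1]
        have : (X + C (2:ℂ)).Monic := Polynomial.monic_X_add_C 2
        simp [this.leadingCoeff]
    | succ m ih =>
      obtain ⟨hdP, hdQ, hb, hrel⟩ := ih
      set a := (P (m+1)).leadingCoeff with ha_def
      set b := (Q (m+1)).leadingCoeff with hb_def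
      have ha : a ≠ 0 := by
        intro h
        rw [h, mul_zero] at hrel
        exact hb (by
          have := hrel.symm
          rcases mul_eq_zero.1 this with h' | h'
          · exact absurd h' (pow_ne_zero _ hlam)
          · exact h')
      have hPne : P (m+1) ≠ 0 := fun h => ha (by simp [ha_def, h])
      have hQne : Q (m+1) ≠ 0 := fun h => hb (by simp [hb_def, h])
      have hd1 : 1 ≤ (2:ℕ) ^ m := Nat.one_le_two_pow
      -- a + b ≠ 0
      have hSm : (∑ i ∈ Finset.range (m+1), lam ^ i) ≠ 0 := by
        cases m with
        | zero => simp
        | succ k => exact hS (k+1) (Nat.succ_le_succ (Nat.zero_le _))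
      have hab : a + b ≠ 0 := by
        intro h
        have hsum : (∑ i ∈ Finset.range (m+2), lam ^ i) * b = 0 := by
          have : (∑ i ∈ Finset.range (m+1), lam ^ i) * (a + b) = 0 := by
            rw [h, mul_zero]
          calc (∑ i ∈ Finset.range (m+2), lam ^ i) * b
              = (∑ i ∈ Finset.range (m+1), lam ^ i) * b + lam ^ (m+1) * b := by
                rw [Finset.sum_range_succ]; ring
            _ = (∑ i ∈ Finset.range (m+1), lam ^ i) * b
                + (∑ i ∈ Finset.range (m+1), lam ^ i) * a := by rw [hrel]
            _ = (∑ i ∈ Finset.range (m+1), lam ^ i) * (a + b) := by ring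
            _ = 0 := this
        rcases mul_eq_zero.1 hsum with h' | h'
        · exact hS (m+1) (Nat.succ_le_succ (Nat.zero_le _)) h'
        · exact hb h'
      -- degree of P (m+2)
      have hdP' : (P (m+2)).natDegree = 2 ^ (m+1) - 1 := by
        rw [hrecP (m+1), Polynomial.natDegree_mul
              (mul_ne_zero (Polynomial.C_ne_zero.mpr hlam) hPne) hQne,
            Polynomial.natDegree_mul (Polynomial.C_ne_zero.mpr hlam) hPne,
            Polynomial.natDegree_C, hdP, hdQ]
        omega
      have hlcP' : (P (m+2)).leadingCoeff = lam * a * b := by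
        rw [hrecP (m+1)]
        simp only [Polynomial.leadingCoeff_mul, Polynomial.leadingCoeff_C,
          ← ha_def, ← hb_def]
      -- degree of Q (m+2)
      have hdXPQ : (X * P (m+1) * Q (m+1)).natDegree = 2 ^ (m+1) := by
        rw [Polynomial.natDegree_mul (by
              exact mul_ne_zero Polynomial.X_ne_zero hPne) hQne,
            Polynomial.natDegree_mul Polynomial.X_ne_zero hPne,
            Polynomial.natDegree_X, hdP, hdQ]
        have : (2:ℕ) ^ (m+1) = 2 ^ m + 2 ^ m := by ring
        omega
      have hlcXPQ : (X * P (m+1) * Q (m+1)).leadingCoeff = a * b := by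
        simp [Polynomial.leadingCoeff_mul, ha_def, hb_def]
      have hcoeffP2 : ((P (m+1)) ^ 2).coeff (2 ^ (m+1)) = 0 := by
        apply Polynomial.coeff_eq_zero_of_natDegree_lt
        calc ((P (m+1)) ^ 2).natDegree ≤ 2 * (P (m+1)).natDegree :=
              Polynomial.natDegree_pow_le
          _ = 2 * (2 ^ m - 1) := by rw [hdP]
          _ < 2 ^ (m+1) := by
              have : (2:ℕ) ^ (m+1) = 2 * 2 ^ m := by ring
              omega
      have hcoeffQ : (Q (m+2)).coeff (2 ^ (m+1)) = b * (a + b) := by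
        rw [hrecQ (m+1)]
        rw [Polynomial.coeff_add, Polynomial.coeff_add, hcoeffP2]
        have h1 : (X * P (m+1) * Q (m+1)).coeff (2 ^ (m+1)) = a * b := by
          rw [← hdXPQ]
          exact hlcXPQ
        have h2 : ((Q (m+1)) ^ 2).coeff (2 ^ (m+1)) = b ^ 2 := by
          have hd : ((Q (m+1)) ^ 2).natDegree = 2 ^ (m+1) := by
            rw [Polynomial.natDegree_pow, hdQ]; ring
          have := Polynomial.coeff_natDegree (p := (Q (m+1)) ^ 2)
          rw [hd] at this
          rw [this, Polynomial.leadingCoeff_pow, ← hb_def]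
        rw [h1, h2]
        ring
      have hdegQle : (Q (m+2)).natDegree ≤ 2 ^ (m+1) := by
        rw [hrecQ (m+1)]
        apply le_trans (Polynomial.natDegree_add_le _ _)
        apply max_le
        apply le_trans (Polynomial.natDegree_add_le _ _)
        apply max_le
        · calc ((P (m+1)) ^ 2).natDegree ≤ 2 * (P (m+1)).natDegree :=
              Polynomial.natDegree_pow_le
            _ ≤ 2 ^ (m+1) := by
              rw [hdP]
              have : (2:ℕ) ^ (m+1) = 2 * 2 ^ m := by ring
              omega
        · rw [hdXPQ]
        · calc ((Q (m+1)) ^ 2).natDegree ≤ 2 * (Q (m+1)).natDegree :=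
              Polynomial.natDegree_pow_le
            _ = 2 ^ (m+1) := by rw [hdQ]; ring
      have hbab : b * (a + b) ≠ 0 := mul_ne_zero hb hab
      have hdQ' : (Q (m+2)).natDegree = 2 ^ (m+1) := by
        apply le_antisymm hdegQle
        apply Polynomial.le_natDegree_of_ne_zero
        rw [hcoeffQ]; exact hbab
      have hlcQ' : (Q (m+2)).leadingCoeff = b * (a + b) := by
        rw [Polynomial.leadingCoeff, hdQ', hcoeffQ]
      refine ⟨hdP', hdQ', by rw [hlcQ']; exact hbab, ?_⟩
      rw [hlcP', hlcQ', Finset.sum_range_succ]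
      linear_combination lam * b * hrel
  intro n hn
  obtain ⟨m, rfl⟩ : ∃ m, n = m + 1 := ⟨n - 1, by omega⟩
  obtain ⟨h1, h2, -, -⟩ := main m
  exact ⟨by simpa using h1, by simpa using h2⟩
end
end

section
/- For every λ ∈ ℂ and every n ≥ 3: the coefficient of t^{2^{n−1}−1} in P_n equals B_n(λ) = λⁿ ∏_{j=1}^{n−2} (1 + λ + ⋯ + λ^j)^{2^{n−2−j}}, and the coefficient of t^{2^{n−1}} in Q_n equals C_n(λ) = (1 + λ + ⋯ + λ^{n−1}) ∏_{j=1}^{n−2} (1 + λ + ⋯ + λ^j)^{2^{n−2−j}}. -/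
open Filter Topology

noncomputable section

/-- Canonical polynomial pair `(P_n, Q_n)`. -/
def PQa (lam : ℂ) : ℕ → Polynomial ℂ × Polynomial ℂ
  | 0 => (1, 1)
  | n + 1 =>
      (Polynomial.C lam * (PQa lam n).1 * (PQa lam n).2,
        (PQa lam n).1 ^ 2 + Polynomial.X * (PQa lam n).1 * (PQa lam n).2 + (PQa lam n).2 ^ 2)

def PiProd (lam : ℂ) (n : ℕ) : ℂ :=
  ∏ j ∈ Finset.Icc 1 (n - 2), (∑ i ∈ Finset.range (j + 1), lam ^ i) ^ (2 ^ (n - 2 - j))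

lemma PQa_eval (lam t : ℂ) (n : ℕ) :
    (Fh lam t)^[n] (1, 1) = ((PQa lam n).1.eval t, (PQa lam n).2.eval t) := by
  induction n with
  | zero => simp [PQa]
  | succ n ih =>
      rw [Function.iterate_succ_apply', ih]
      simp [PQa, Fh]

lemma PiProd_succ (lam : ℂ) (n : ℕ) (hn : 1 ≤ n) :
    PiProd lam (n + 1) = (∑ i ∈ Finset.range n, lam ^ i) * (PiProd lam n) ^ 2 := by
  match n, hn with
  | 1, _ => simp [PiProd]
  | (k + 2), _ =>
      unfold PiProd
      rw [show k + 2 + 1 - 2 = (k + 1) from rfl, show k + 2 - 2 = k from rfl]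
      rw [Finset.prod_Icc_succ_top (by omega : 1 ≤ k + 1)]
      have h1 : ∀ j ∈ Finset.Icc 1 k,
          (∑ i ∈ Finset.range (j + 1), lam ^ i) ^ (2 ^ (k + 1 - j)) =
          ((∑ i ∈ Finset.range (j + 1), lam ^ i) ^ (2 ^ (k - j))) ^ 2 := by
        intro j hj
        rw [Finset.mem_Icc] at hj
        rw [← pow_mul]
        congr 1
        have : k + 1 - j = (k - j) + 1 := by omega
        rw [this, pow_succ]
      rw [Finset.prod_congr rfl h1, Finset.prod_pow]
      rw [show k + 1 - (k + 1) = 0 from by omega]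
      ring

lemma key (lam : ℂ) (n : ℕ) (hn : 1 ≤ n) :
    (PQa lam n).1.natDegree ≤ 2 ^ (n - 1) - 1 ∧
    (PQa lam n).2.natDegree ≤ 2 ^ (n - 1) ∧
    (PQa lam n).1.coeff (2 ^ (n - 1) - 1) = lam ^ n * PiProd lam n ∧
    (PQa lam n).2.coeff (2 ^ (n - 1)) = (∑ i ∈ Finset.range n, lam ^ i) * PiProd lam n := by
  induction n, hn using Nat.le_induction with
  | base =>
      have hp : (PQa lam 1).1 = Polynomial.C lam := by simp [PQa]
      have hq : (PQa lam 1).2 = Polynomial.X + Polynomial.C 2 := by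
        have : (Polynomial.C (2:ℂ)) = 2 := by
          rw [show (2:ℂ) = ((2:ℕ):ℂ) from by norm_num, Polynomial.C_eq_natCast]; norm_num
        simp [PQa, this]; ring
      refine ⟨?_, ?_, ?_, ?_⟩
      · simp [hp]
      · rw [hq]
        refine le_trans (Polynomial.natDegree_add_le _ _) ?_
        simp [Polynomial.natDegree_X, Polynomial.natDegree_C]
      · simp [hp, PiProd]
      · rw [hq]
        simp [PiProd, Polynomial.coeff_add, Polynomial.coeff_X_one, Polynomial.coeff_C]
  | succ n hn ih =>
      obtain ⟨hdp, hdq, hcp, hcq⟩ := ih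
      set p := (PQa lam n).1 with hpdef
      set q := (PQa lam n).2 with hqdef
      have hD : 1 ≤ 2 ^ (n - 1) := Nat.one_le_two_pow
      have h2n : 2 ^ n = 2 * 2 ^ (n - 1) := by
        conv_lhs => rw [show n = (n - 1) + 1 from by omega]
        rw [pow_succ]; ring
      set D := 2 ^ (n - 1) with hDdef
      have hs1 : n + 1 - 1 = n := by omega
      have hPQ1 : (PQa lam (n + 1)).1 = Polynomial.C lam * p * q := rfl
      have hPQ2 : (PQa lam (n + 1)).2 =
          p ^ 2 + Polynomial.X * p * q + q ^ 2 := rfl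
      -- coefficient of p*q at 2D - 1
      have hpq_coeff : (p * q).coeff (2 * D - 1) =
          (lam ^ n * PiProd lam n) * ((∑ i ∈ Finset.range n, lam ^ i) * PiProd lam n) := by
        rw [show 2 * D - 1 = (D - 1) + D from by omega]
        rw [Polynomial.coeff_mul_add_eq_of_natDegree_le hdp hdq, hcp, hcq]
      refine ⟨?_, ?_, ?_, ?_⟩
      · rw [hPQ1, hs1]
        refine le_trans (Polynomial.natDegree_mul_le) ?_
        have h3 := Polynomial.natDegree_mul_le (p := Polynomial.C lam) (q := p)
        have h4 : (Polynomial.C lam).natDegree = 0 := Polynomial.natDegree_C lam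
        omega
      · rw [hPQ2, hs1]
        refine le_trans (Polynomial.natDegree_add_le _ _) ?_
        have h5 : (p ^ 2).natDegree ≤ 2 * (D - 1) := le_trans (Polynomial.natDegree_pow_le) (by omega)
        have h6 : (Polynomial.X * p * q).natDegree ≤ 2 ^ n := by
          refine le_trans (Polynomial.natDegree_mul_le) ?_
          have h7 := Polynomial.natDegree_mul_le (p := (Polynomial.X : Polynomial ℂ)) (q := p)
          have h8 : (Polynomial.X : Polynomial ℂ).natDegree ≤ 1 := Polynomial.natDegree_X_le
          omega
        have h9 : (q ^ 2).natDegree ≤ 2 * D := le_trans (Polynomial.natDegree_pow_le) (by omega)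
        have h10 : (p ^ 2 + Polynomial.X * p * q).natDegree ≤ 2 ^ n :=
          le_trans (Polynomial.natDegree_add_le _ _) (by omega)
        omega
      · rw [hPQ1, hs1, mul_assoc, Polynomial.coeff_C_mul]
        rw [show 2 ^ n - 1 = 2 * D - 1 from by omega, hpq_coeff]
        rw [PiProd_succ lam n hn]
        ring
      · rw [hPQ2, hs1, Polynomial.coeff_add, Polynomial.coeff_add]
        have e1 : (p ^ 2).coeff (2 ^ n) = 0 := by
          refine Polynomial.coeff_eq_zero_of_natDegree_lt ?_
          refine lt_of_le_of_lt (Polynomial.natDegree_pow_le) ?_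
          have : p.natDegree ≤ D - 1 := hdp
          omega
        have e2 : (Polynomial.X * p * q).coeff (2 ^ n) =
            (lam ^ n * PiProd lam n) * ((∑ i ∈ Finset.range n, lam ^ i) * PiProd lam n) := by
          rw [mul_assoc, show (2 : ℕ) ^ n = (2 * D - 1) + 1 from by omega,
            Polynomial.coeff_X_mul, hpq_coeff]
        have e3 : (q ^ 2).coeff (2 ^ n) =
            ((∑ i ∈ Finset.range n, lam ^ i) * PiProd lam n) ^ 2 := by
          rw [sq, show (2 : ℕ) ^ n = D + D from by omega,
            Polynomial.coeff_mul_add_eq_of_natDegree_le hdq hdq, hcq, sq]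
        rw [e1, e2, e3, PiProd_succ lam n hn, Finset.sum_range_succ]
        ring

/-- For every `λ ∈ ℂ` and every `n ≥ 3`, writing `F_{λ,t}ⁿ(1,1) = (P_n(t), Q_n(t))`:
the coefficient of `t^(2^(n-1)-1)` in `P_n` is
`B_n(λ) = λⁿ ∏_{j=1}^{n-2} (1 + λ + ⋯ + λʲ)^(2^(n-2-j))`, and the coefficient of
`t^(2^(n-1))` in `Q_n` is
`C_n(λ) = (1 + λ + ⋯ + λ^(n-1)) ∏_{j=1}^{n-2} (1 + λ + ⋯ + λʲ)^(2^(n-2-j))`. -/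
theorem leading_coefficients_of_Pn_Qn (lam : ℂ) (P Q : ℕ → Polynomial ℂ)
    (hPQ : ∀ (n : ℕ) (t : ℂ), (Fh lam t)^[n] (1, 1) = ((P n).eval t, (Q n).eval t)) :
    ∀ n : ℕ, 3 ≤ n →
      (P n).coeff (2 ^ (n - 1) - 1) =
        lam ^ n * ∏ j ∈ Finset.Icc 1 (n - 2),
          (∑ i ∈ Finset.range (j + 1), lam ^ i) ^ (2 ^ (n - 2 - j)) ∧
      (Q n).coeff (2 ^ (n - 1)) =
        (∑ i ∈ Finset.range n, lam ^ i) * ∏ j ∈ Finset.Icc 1 (n - 2),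
          (∑ i ∈ Finset.range (j + 1), lam ^ i) ^ (2 ^ (n - 2 - j)) := by
  intro n hn
  have h1 : P n = (PQa lam n).1 := by
    apply Polynomial.funext
    intro t
    have h := (hPQ n t).symm.trans (PQa_eval lam t n)
    exact congrArg Prod.fst h
  have h2 : Q n = (PQa lam n).2 := by
    apply Polynomial.funext
    intro t
    have h := (hPQ n t).symm.trans (PQa_eval lam t n)
    exact congrArg Prod.snd h
  obtain ⟨_, _, hc1, hc2⟩ := key lam n (by omega)
  rw [h1, h2, hc1, hc2]
  exact ⟨rfl, rfl⟩
end
end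

section
/- Let λ ∈ ℂ be a nonzero algebraic number that is not a root of unity, or let λ = 1, and let k = ℚ(λ). There exists a constant C > 0 such that for every integer n ≥ 1, the number of nonarchimedean places v of k satisfying |λ|_v = 1, |1 + λ + ⋯ + λ^i|_v = 1 for all 1 ≤ i < n, and |1 + λ + ⋯ + λⁿ|_v < 1 (counted with multiplicity N_v) is at most C·n. -/
open Filter Topology IntermediateField

noncomputable section

/-- The set of places of a number field `k`, as described by the product
formula: a family of pairwise distinct absolute values `v` on `k`, each either
archimedean (the restriction of the complex absolute value under an embedding
`k → ℂ`) or an extension of a `p`-adic absolute value on `ℚ`, together with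
integer multiplicities `N_v ≥ 1` such that for every `x ∈ k \ {0}` all but
finitely many factors `|x|_v^{N_v}` equal `1` and `∏_v |x|_v^{N_v} = 1`. -/
structure PlaceFamily (k : Type) [Field k] [Algebra ℚ k] where
  ι : Type
  v : ι → AbsoluteValue k ℝ
  N : ι → ℕ
  N_pos : ∀ i, 0 < N i
  v_injective : Function.Injective v
  arch_or_padic : ∀ i,
    (∃ σ : k →+* ℂ, ∀ x, v i x = ‖σ x‖) ∨
    (∃ p : ℕ, p.Prime ∧ ∀ q : ℚ, v i (algebraMap ℚ k q) = (padicNorm p q : ℝ))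
  mulSupport_finite : ∀ x : k, x ≠ 0 → (Function.mulSupport fun i => v i x ^ N i).Finite
  product_formula : ∀ x : k, x ≠ 0 → ∏ᶠ i, v i x ^ N i = 1


section aux
variable {K : Type*} [Field K] {v : AbsoluteValue K ℝ}

lemma abv_sum_le_of_le {ι : Type*} (s : Finset ι) (f : ι → K) {c : ℝ}
    (hna : ∀ x y : K, v (x + y) ≤ max (v x) (v y)) (hc : 0 ≤ c)
    (h : ∀ j ∈ s, v (f j) ≤ c) : v (∑ j ∈ s, f j) ≤ c := by
  induction s using Finset.cons_induction with
  | empty => simpa using hc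
  | cons a s ha ih =>
    rw [Finset.sum_cons]
    refine (hna _ _).trans (max_le (h a (Finset.mem_cons_self a s)) ?_)
    exact ih fun j hj => h j (Finset.mem_cons_of_mem hj)

lemma abv_sum_lt_of_lt {ι : Type*} (s : Finset ι) (f : ι → K) {c : ℝ}
    (hna : ∀ x y : K, v (x + y) ≤ max (v x) (v y)) (hc : 0 < c)
    (h : ∀ j ∈ s, v (f j) < c) : v (∑ j ∈ s, f j) < c := by
  induction s using Finset.cons_induction with
  | empty => simpa using hc
  | cons a s ha ih =>
    rw [Finset.sum_cons]
    refine lt_of_le_of_lt (hna _ _) (max_lt (h a (Finset.mem_cons_self a s)) ?_)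
    exact ih fun j hj => h j (Finset.mem_cons_of_mem hj)

lemma nonarch_of_natBounded (hb : ∀ n : ℕ, v (n : K) ≤ 1) :
    ∀ x y : K, v (x + y) ≤ max (v x) (v y) := by
  intro x y
  set Mx := max (v x) (v y) with hM
  have hM0 : 0 ≤ Mx := le_max_of_le_left (v.nonneg x)
  have key : ∀ n : ℕ, (v (x + y)) ^ n ≤ (n + 1 : ℝ) * Mx ^ n := by
    intro n
    rw [← map_pow, add_pow]
    calc v (∑ k ∈ Finset.range (n + 1), x ^ k * y ^ (n - k) * (n.choose k : K))
        ≤ ∑ k ∈ Finset.range (n + 1), v (x ^ k * y ^ (n - k) * (n.choose k : K)) :=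
          v.sum_le _ _
      _ ≤ ∑ _k ∈ Finset.range (n + 1), Mx ^ n := by
          apply Finset.sum_le_sum; intro k hk
          rw [map_mul, map_mul, map_pow, map_pow]
          have hk' : k ≤ n := Nat.lt_succ_iff.mp (Finset.mem_range.mp hk)
          have h1 : v x ^ k * v y ^ (n - k) * v (n.choose k : K)
              ≤ v x ^ k * v y ^ (n - k) * 1 := by
            apply mul_le_mul_of_nonneg_left (hb _)
            positivity
          refine h1.trans ?_
          rw [mul_one]
          have h2 : v x ^ k * v y ^ (n - k) ≤ Mx ^ k * Mx ^ (n - k) :=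
            mul_le_mul (pow_le_pow_left₀ (v.nonneg x) (le_max_left _ _) k)
              (pow_le_pow_left₀ (v.nonneg y) (le_max_right _ _) _)
              (pow_nonneg (v.nonneg y) _) (pow_nonneg hM0 _)
          refine h2.trans_eq ?_
          rw [← pow_add, Nat.add_sub_cancel' hk']
      _ = (n + 1 : ℝ) * Mx ^ n := by
          rw [Finset.sum_const, Finset.card_range, nsmul_eq_mul]
          push_cast; ring
  rcases eq_or_lt_of_le hM0 with hM0' | hM0'
  · have hx0 : v x = 0 := le_antisymm ((le_max_left (v x) (v y)).trans hM0'.ge) (v.nonneg x)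
    have hy0 : v y = 0 := le_antisymm ((le_max_right (v x) (v y)).trans hM0'.ge) (v.nonneg y)
    have : x = 0 := v.eq_zero.mp hx0
    have : y = 0 := v.eq_zero.mp hy0
    simp_all
  · -- Mx > 0
    set t := v (x + y)
    have ht0 : 0 ≤ t := v.nonneg _
    have hbound : ∀ n : ℕ, 2 ≤ n → t ≤ ((n : ℝ) ^ ((n : ℝ)⁻¹)) ^ 2 * Mx := by
      intro n hn
      have hn0 : (n : ℕ) ≠ 0 := by omega
      have h1 : t ^ n ≤ (n : ℝ) ^ 2 * Mx ^ n := by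
        refine (key n).trans ?_
        have : (n + 1 : ℝ) ≤ (n : ℝ) ^ 2 := by
          have : (n + 1 : ℕ) ≤ n ^ 2 := by nlinarith [hn]
          exact_mod_cast this
        exact mul_le_mul_of_nonneg_right this (pow_nonneg hM0 n)
      have h2 : (t ^ n) ^ ((n : ℝ)⁻¹) ≤ ((n : ℝ) ^ 2 * Mx ^ n) ^ ((n : ℝ)⁻¹) :=
        Real.rpow_le_rpow (pow_nonneg ht0 n) h1 (by positivity)
      rw [Real.pow_rpow_inv_natCast ht0 hn0] at h2
      refine h2.trans_eq ?_
      rw [Real.mul_rpow (by positivity) (by positivity),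
        Real.pow_rpow_inv_natCast hM0 hn0]
      rw [← Real.rpow_natCast (n : ℝ) 2,
        ← Real.rpow_natCast ((n : ℝ) ^ ((n : ℝ)⁻¹)) 2,
        ← Real.rpow_mul (by positivity), ← Real.rpow_mul (by positivity), mul_comm ((2:ℕ):ℝ) ((n:ℝ)⁻¹), mul_comm]
    have htend : Tendsto (fun n : ℕ => ((n : ℝ) ^ ((n : ℝ)⁻¹)) ^ 2 * Mx) atTop
        (𝓝 (1 ^ 2 * Mx)) := by
      have h1 : Tendsto (fun n : ℕ => (n : ℝ) ^ ((n : ℝ)⁻¹)) atTop (𝓝 1) := by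
        have := tendsto_rpow_div.comp tendsto_natCast_atTop_atTop (α := ℕ)
        simpa [Function.comp_def, one_div] using this
      exact ((h1.pow 2).mul_const Mx)
    have := ge_of_tendsto htend (eventually_atTop.mpr ⟨2, fun n hn => hbound n hn⟩)
    simpa using this

end aux

section aux2

variable {K : Type*} [Field K] [Algebra ℚ K]

lemma exists_pow_eq_abv_rat (v : AbsoluteValue K ℝ)
    (hna : ∀ x y : K, v (x + y) ≤ max (v x) (v y))
    {x : K} (hx : x ≠ 0) {P : Polynomial ℚ} (hP : P ≠ 0)
    (hPx : Polynomial.aeval x P = 0) :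
    ∃ m : ℕ, 1 ≤ m ∧ m ≤ P.natDegree ∧
      ∃ z : ℚ, z ≠ 0 ∧ v x ^ m = v (algebraMap ℚ K z) := by
  classical
  set f : ℕ → K := fun i => algebraMap ℚ K (P.coeff i) * x ^ i with hf
  have hsum : ∑ i ∈ P.support, f i = 0 := by
    rw [← hPx, Polynomial.aeval_def, Polynomial.eval₂_eq_sum, Polynomial.sum_def]
  have hsupp : P.support.Nonempty := Polynomial.support_nonempty.mpr hP
  obtain ⟨i0, hi0s, hmax0⟩ := P.support.exists_max_image (fun i => v (f i)) hsupp
  have hmax : ∀ j ∈ P.support, v (f j) ≤ v (f i0) := hmax0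
  have hfi0 : f i0 ≠ 0 := by
    apply mul_ne_zero
    · exact (map_ne_zero (algebraMap ℚ K)).mpr (Polynomial.mem_support_iff.mp hi0s)
    · exact pow_ne_zero _ hx
  have hwi0 : 0 < v (f i0) := v.pos hfi0
  have halg : ∀ q : ℚ, q ≠ 0 → 0 < v (algebraMap ℚ K q) := fun q hq =>
    v.pos ((map_ne_zero (algebraMap ℚ K)).mpr hq)
  by_cases hex : ∃ j ∈ P.support, j ≠ i0 ∧ v (f j) = v (f i0)
  · obtain ⟨j, hjs, hji, hwj⟩ := hex
    have ht0 : 0 < v x := v.pos hx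
    have hkey : ∀ a b : ℕ, a < b → b ∈ P.support → a ∈ P.support →
        v (f a) = v (f b) →
        ∃ m : ℕ, 1 ≤ m ∧ m ≤ P.natDegree ∧
          ∃ z : ℚ, z ≠ 0 ∧ v x ^ m = v (algebraMap ℚ K z) := by
      intro a b hab hbs has hwab
      have hca : P.coeff a ≠ 0 := Polynomial.mem_support_iff.mp has
      have hcb : P.coeff b ≠ 0 := Polynomial.mem_support_iff.mp hbs
      refine ⟨b - a, by omega, le_trans (by omega) (Polynomial.le_natDegree_of_ne_zero hcb),
        P.coeff a / P.coeff b, div_ne_zero hca hcb, ?_⟩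
      have hwab' : v (algebraMap ℚ K (P.coeff a)) * v x ^ a
          = v (algebraMap ℚ K (P.coeff b)) * v x ^ b := by
        simpa only [hf, map_mul, map_pow] using hwab
      have hxa : (0:ℝ) < v x ^ a := pow_pos ht0 a
      have hpow : v x ^ b = v x ^ a * v x ^ (b - a) := by
        rw [← pow_add]; congr 1; omega
      have h2 : v (algebraMap ℚ K (P.coeff a))
          = v (algebraMap ℚ K (P.coeff b)) * v x ^ (b - a) := by
        apply mul_right_cancel₀ (ne_of_gt hxa)
        rw [hwab', hpow]; ring
      rw [map_div₀, map_div₀, h2, mul_comm, mul_div_assoc,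
        div_self (ne_of_gt (halg _ hcb)), mul_one]
    rcases lt_or_gt_of_ne hji with h | h
    · exact hkey j i0 h hi0s hjs hwj
    · exact hkey i0 j h hjs hi0s hwj.symm
  · push_neg at hex
    have hstrict : ∀ j ∈ P.support.erase i0, v (f j) < v (f i0) := by
      intro j hj
      obtain ⟨hjne, hjs⟩ := Finset.mem_erase.mp hj
      exact lt_of_le_of_ne (hmax j hjs) (hex j hjs hjne)
    have hrest : v (∑ j ∈ P.support.erase i0, f j) < v (f i0) :=
      abv_sum_lt_of_lt _ _ hna hwi0 hstrict
    exfalso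
    have hs : f i0 + ∑ j ∈ P.support.erase i0, f j = 0 := by
      rw [Finset.add_sum_erase _ _ hi0s]; exact hsum
    have hneg : f i0 = - ∑ j ∈ P.support.erase i0, f j := by linear_combination hs
    have h3 : v (f i0) = v (∑ j ∈ P.support.erase i0, f j) := by
      rw [hneg, v.map_neg]
    linarith

end aux2

section aux3
variable {K : Type*} [Field K] [Algebra ℚ K]

lemma natBounded_of_padic (v : AbsoluteValue K ℝ) {p : ℕ} (hp : p.Prime)
    (hpv : ∀ q : ℚ, v (algebraMap ℚ K q) = (padicNorm p q : ℝ)) :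
    ∀ n : ℕ, v (n : K) ≤ 1 := by
  haveI : Fact p.Prime := ⟨hp⟩
  intro n
  rw [← map_natCast (algebraMap ℚ K) n, hpv]
  exact_mod_cast padicNorm.of_nat (p := p) n

lemma log_abv_le_of_padic_of_lt_one [FiniteDimensional ℚ K]
    (v : AbsoluteValue K ℝ) {p : ℕ} (hp : p.Prime)
    (hpv : ∀ q : ℚ, v (algebraMap ℚ K q) = (padicNorm p q : ℝ))
    {x : K} (hx : x ≠ 0) (hvx : v x < 1) :
    Real.log (v x) ≤ -Real.log 2 / (Module.finrank ℚ K : ℝ) := by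
  haveI : Fact p.Prime := ⟨hp⟩
  have hna := nonarch_of_natBounded (natBounded_of_padic v hp hpv)
  have hint : IsIntegral ℚ x := IsIntegral.of_finite ℚ x
  obtain ⟨m, hm1, hmd, z, hz, hpow⟩ :=
    exists_pow_eq_abv_rat v hna hx (minpoly.ne_zero hint) (minpoly.aeval ℚ x)
  set D := Module.finrank ℚ K with hD
  have hD1 : 0 < D := Module.finrank_pos
  have hmD : m ≤ D := hmd.trans (minpoly.natDegree_le x)
  have ht0 : 0 < v x := v.pos hx
  -- padicNorm p z ≤ 1/2
  have h1 : (padicNorm p z : ℝ) < 1 := by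
    rw [← hpv z, ← hpow]
    exact pow_lt_one₀ ht0.le hvx (by omega)
  have h1' : padicNorm p z < 1 := by exact_mod_cast h1
  have h2 : padicNorm p z ≤ 1 / 2 := by
    rw [padicNorm.eq_zpow_of_nonzero hz] at h1' ⊢
    have hp1 : (1 : ℚ) < (p : ℚ) := by exact_mod_cast hp.one_lt
    have hneg : -padicValRat p z < 0 := by
      by_contra hcon
      push_neg at hcon
      have : ((p:ℚ)) ^ (0 : ℤ) ≤ (p:ℚ) ^ (-padicValRat p z) :=
        zpow_le_zpow_right₀ hp1.le hcon
      rw [zpow_zero] at this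
      linarith
    have : (p:ℚ) ^ (-padicValRat p z) ≤ (p:ℚ) ^ (-1 : ℤ) :=
      zpow_le_zpow_right₀ hp1.le (by omega)
    refine this.trans ?_
    rw [zpow_neg_one, one_div]
    have h2p : (2:ℚ) ≤ (p:ℚ) := by exact_mod_cast hp.two_le
    exact inv_anti₀ (by norm_num) h2p
  -- v x ^ D ≤ 1/2
  have h3 : v x ^ D ≤ 1 / 2 := by
    have hmm : v x ^ D ≤ v x ^ m := pow_le_pow_of_le_one ht0.le hvx.le hmD
    refine hmm.trans ?_
    rw [hpow, hpv z, show ((1:ℝ)/2) = ((1/2 : ℚ) : ℝ) by norm_num]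
    exact_mod_cast h2
  have h4 : Real.log (v x ^ D) ≤ Real.log (1 / 2) :=
    Real.log_le_log (pow_pos ht0 D) h3
  rw [Real.log_pow, one_div, Real.log_inv] at h4
  have hDpos : (0:ℝ) < (D:ℝ) := by exact_mod_cast hD1
  rw [le_div_iff₀ hDpos, mul_comm]
  exact h4
end aux3

lemma pow_ne_one_real {x : ℝ} {N : ℕ} (hx : 0 ≤ x) (hne : x ≠ 1) (hN : 0 < N) :
    x ^ N ≠ 1 := by
  intro hcon
  rcases lt_or_gt_of_ne hne with h | h
  · have := pow_lt_one₀ hx h hN.ne'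
    rw [hcon] at this; exact lt_irrefl 1 this
  · have : 1 < x ^ N := one_lt_pow₀ h hN.ne'
    rw [hcon] at this; exact lt_irrefl 1 this


/-- Let `λ` be a nonzero algebraic number that is not a root of unity, or
`λ = 1`, and let `k = ℚ(λ)`.  There is a constant `C > 0` such that for every
`n ≥ 1`, the nonarchimedean places `v` of `k` with `|λ|_v = 1`,
`|1 + λ + ⋯ + λⁱ|_v = 1` for all `1 ≤ i < n`, and `|1 + λ + ⋯ + λⁿ|_v < 1`
form a finite set whose cardinality, counted with multiplicity `N_v`, is at
most `C·n`. -/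
theorem count_of_places_bound (lam : ℂ) (hlam : lam ≠ 0) (halg : IsAlgebraic ℚ lam)
    (hru : (∀ n : ℕ, 1 ≤ n → lam ^ n ≠ 1) ∨ lam = 1)
    (M : PlaceFamily ℚ⟮lam⟯) :
    ∃ C : ℝ, 0 < C ∧ ∀ n : ℕ, 1 ≤ n →
      {i : M.ι |
          (∃ p : ℕ, p.Prime ∧ ∀ q : ℚ,
            M.v i (algebraMap ℚ ℚ⟮lam⟯ q) = (padicNorm p q : ℝ)) ∧
          M.v i (IntermediateField.AdjoinSimple.gen ℚ lam) = 1 ∧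
          (∀ j : ℕ, 1 ≤ j → j < n →
            M.v i (∑ l ∈ Finset.range (j + 1),
              (IntermediateField.AdjoinSimple.gen ℚ lam) ^ l) = 1) ∧
          M.v i (∑ l ∈ Finset.range (n + 1),
            (IntermediateField.AdjoinSimple.gen ℚ lam) ^ l) < 1}.Finite ∧
      ∑ᶠ i ∈ {i : M.ι |
          (∃ p : ℕ, p.Prime ∧ ∀ q : ℚ,
            M.v i (algebraMap ℚ ℚ⟮lam⟯ q) = (padicNorm p q : ℝ)) ∧
          M.v i (IntermediateField.AdjoinSimple.gen ℚ lam) = 1 ∧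
          (∀ j : ℕ, 1 ≤ j → j < n →
            M.v i (∑ l ∈ Finset.range (j + 1),
              (IntermediateField.AdjoinSimple.gen ℚ lam) ^ l) = 1) ∧
          M.v i (∑ l ∈ Finset.range (n + 1),
            (IntermediateField.AdjoinSimple.gen ℚ lam) ^ l) < 1},
        (M.N i : ℝ) ≤ C * n := by
  classical
  have hint : IsIntegral ℚ lam := halg.isIntegral
  haveI hfd : FiniteDimensional ℚ ℚ⟮lam⟯ := IntermediateField.adjoin.finiteDimensional hint
  haveI : NumberField ℚ⟮lam⟯ := ⟨⟩
  set g : ℚ⟮lam⟯ := IntermediateField.AdjoinSimple.gen ℚ lam with hgdef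
  have hgmap : algebraMap ℚ⟮lam⟯ ℂ g = lam := IntermediateField.AdjoinSimple.algebraMap_gen ℚ lam
  have hgne : g ≠ 0 := by
    intro h
    apply hlam
    rw [← hgmap, h, map_zero]
  set D := Module.finrank ℚ ℚ⟮lam⟯ with hDdef
  have hD1 : 0 < D := Module.finrank_pos
  have hDpos : (0:ℝ) < (D:ℝ) := by exact_mod_cast hD1
  have halphane : ∀ n : ℕ, (∑ l ∈ Finset.range (n + 1), g ^ l) ≠ 0 := by
    intro n h0
    have hmap : (algebraMap ℚ⟮lam⟯ ℂ) (∑ l ∈ Finset.range (n + 1), g ^ l)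
        = ∑ l ∈ Finset.range (n + 1), lam ^ l := by
      rw [map_sum]; exact Finset.sum_congr rfl fun l _ => by rw [map_pow, hgmap]
    rw [h0, map_zero] at hmap
    rcases hru with h | h
    · have hgeom := geom_sum_mul lam (n + 1)
      rw [← hmap, zero_mul] at hgeom
      exact (sub_ne_zero.mpr (h (n + 1) (by omega))) hgeom.symm
    · rw [h] at hmap
      simp only [one_pow, Finset.sum_const, Finset.card_range, nsmul_eq_mul, mul_one] at hmap
      exact (Nat.cast_ne_zero (R := ℂ)).mpr (Nat.succ_ne_zero n) hmap.symm
  -- archimedean indices are finite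
  have hArchFin : {i : M.ι | ∃ σ : ℚ⟮lam⟯ →+* ℂ, ∀ x, M.v i x = ‖σ x‖}.Finite := by
    rw [← Set.finite_coe_iff]
    have hch : ∀ i : {i : M.ι | ∃ σ : ℚ⟮lam⟯ →+* ℂ, ∀ x, M.v i x = ‖σ x‖},
        ∃ σ : ℚ⟮lam⟯ →+* ℂ, ∀ x, M.v i.1 x = ‖σ x‖ := fun i => i.2
    choose F hF using hch
    have hinj : Function.Injective F := by
      intro i j hij
      apply Subtype.ext
      apply M.v_injective
      apply DFunLike.ext
      intro x
      rw [hF i x, hF j x, hij]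
    exact Finite.of_injective F hinj
  have hTfin : ({i : M.ι | ∃ σ : ℚ⟮lam⟯ →+* ℂ, ∀ x, M.v i x = ‖σ x‖}
      ∪ {i | M.v i g ≠ 1}).Finite := by
    apply Set.Finite.union hArchFin
    apply (M.mulSupport_finite g hgne).subset
    intro i hi
    rw [Function.mem_mulSupport]
    exact pow_ne_one_real ((M.v i).nonneg g) hi (M.N_pos i)
  set B := ∑ i ∈ hTfin.toFinset, (M.N i : ℝ) * Real.log (2 * max 1 (M.v i g)) with hBdef
  have hlogmax_nonneg : ∀ i, 0 ≤ Real.log (2 * max 1 (M.v i g)) := by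
    intro i
    apply Real.log_nonneg
    have h1 : (1:ℝ) ≤ max 1 (M.v i g) := le_max_left _ _
    linarith
  have hB0 : 0 ≤ B :=
    Finset.sum_nonneg fun i _ => mul_nonneg (Nat.cast_nonneg _) (hlogmax_nonneg i)
  have hlog2 : 0 < Real.log 2 := Real.log_pos (by norm_num)
  refine ⟨(D:ℝ) * B / Real.log 2 + 1, by positivity, ?_⟩
  intro n hn
  set α := ∑ l ∈ Finset.range (n + 1), g ^ l with hαdef
  have hαne := halphane n
  set S : Set M.ι := {i : M.ι |
      (∃ p : ℕ, p.Prime ∧ ∀ q : ℚ,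
        M.v i (algebraMap ℚ ℚ⟮lam⟯ q) = (padicNorm p q : ℝ)) ∧
      M.v i g = 1 ∧
      (∀ j : ℕ, 1 ≤ j → j < n →
        M.v i (∑ l ∈ Finset.range (j + 1), g ^ l) = 1) ∧
      M.v i α < 1} with hSdef
  have hSsub : S ⊆ Function.mulSupport (fun i => M.v i α ^ M.N i) := by
    intro i hi
    rw [Function.mem_mulSupport]
    exact pow_ne_one_real ((M.v i).nonneg α) (ne_of_lt hi.2.2.2) (M.N_pos i)
  have hSfin : S.Finite := (M.mulSupport_finite α hαne).subset hSsub
  refine ⟨hSfin, ?_⟩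
  rw [← Set.Finite.coe_toFinset hSfin, finsum_mem_coe_finset]
  -- product formula
  set F : Finset M.ι := (M.mulSupport_finite α hαne).toFinset with hFdef
  have hprodF : ∏ i ∈ F, M.v i α ^ M.N i = 1 := by
    rw [← finprod_eq_prod _ (M.mulSupport_finite α hαne)]
    exact M.product_formula α hαne
  have hlogsum : ∑ i ∈ F, (M.N i : ℝ) * Real.log (M.v i α) = 0 := by
    have hcon := congrArg Real.log hprodF
    rw [Real.log_one, Real.log_prod
      (fun i _ => ne_of_gt (pow_pos ((M.v i).pos hαne) _))] at hcon
    rw [← hcon]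
    exact Finset.sum_congr rfl fun i _ => (Real.log_pow _ _).symm
  have hsplit := Finset.sum_filter_add_sum_filter_not F (fun i => 1 < M.v i α)
    (fun i => (M.N i : ℝ) * Real.log (M.v i α))
  rw [hlogsum] at hsplit
  set P1 := F.filter (fun i => 1 < M.v i α) with hP1def
  set P2 := F.filter (fun i => ¬ 1 < M.v i α) with hP2def
  have hS'sub : hSfin.toFinset ⊆ P2 := by
    intro i hi
    rw [Set.Finite.mem_toFinset] at hi
    rw [hP2def, Finset.mem_filter]
    exact ⟨(Set.Finite.mem_toFinset _).mpr (hSsub hi), not_lt.mpr (le_of_lt hi.2.2.2)⟩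
  -- per place lower bound on S
  have h_eps : ∀ i ∈ hSfin.toFinset,
      Real.log 2 / (D:ℝ) * (M.N i : ℝ) ≤ -((M.N i : ℝ) * Real.log (M.v i α)) := by
    intro i hi
    rw [Set.Finite.mem_toFinset] at hi
    obtain ⟨⟨p, pp, hpv⟩, hvg, hmid, hvα⟩ := hi
    have hle := log_abv_le_of_padic_of_lt_one (M.v i) pp hpv hαne hvα
    have hN0 : (0:ℝ) ≤ (M.N i : ℝ) := Nat.cast_nonneg _
    have h2 : Real.log 2 / (D:ℝ) ≤ -Real.log (M.v i α) := by
      rw [neg_div] at hle; linarith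
    nlinarith
  -- nonneg of -(N log v) on P2
  have hP2nonneg : ∀ i ∈ P2, 0 ≤ -((M.N i : ℝ) * Real.log (M.v i α)) := by
    intro i hi
    rw [hP2def, Finset.mem_filter] at hi
    have : Real.log (M.v i α) ≤ 0 := Real.log_nonpos ((M.v i).nonneg α) (not_lt.mp hi.2)
    have hN0 : (0:ℝ) ≤ (M.N i : ℝ) := Nat.cast_nonneg _
    nlinarith
  -- chain
  have hchain1 : Real.log 2 / (D:ℝ) * (∑ i ∈ hSfin.toFinset, (M.N i : ℝ))
      ≤ ∑ i ∈ P2, -((M.N i : ℝ) * Real.log (M.v i α)) := by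
    rw [Finset.mul_sum]
    refine le_trans (Finset.sum_le_sum h_eps) ?_
    exact Finset.sum_le_sum_of_subset_of_nonneg hS'sub fun i hi _ => hP2nonneg i hi
  have hchain2 : ∑ i ∈ P2, -((M.N i : ℝ) * Real.log (M.v i α))
      = ∑ i ∈ P1, (M.N i : ℝ) * Real.log (M.v i α) := by
    rw [Finset.sum_neg_distrib]
    linarith
  -- per place upper bound on P1
  have hP1bound : ∀ i ∈ P1, (M.N i : ℝ) * Real.log (M.v i α)
      ≤ (n:ℝ) * ((M.N i : ℝ) * Real.log (2 * max 1 (M.v i g))) := by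
    intro i hi
    rw [hP1def, Finset.mem_filter] at hi
    have hv1 : 1 < M.v i α := hi.2
    have hmax1 : (1:ℝ) ≤ max 1 (M.v i g) := le_max_left _ _
    have hvαle : M.v i α ≤ (2 * max 1 (M.v i g)) ^ n := by
      rw [hαdef]
      calc M.v i (∑ l ∈ Finset.range (n + 1), g ^ l)
          ≤ ∑ l ∈ Finset.range (n + 1), M.v i (g ^ l) := (M.v i).sum_le _ _
        _ ≤ ∑ _l ∈ Finset.range (n + 1), (max 1 (M.v i g)) ^ n := by
            apply Finset.sum_le_sum
            intro l hl
            rw [map_pow]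
            refine le_trans (pow_le_pow_left₀ ((M.v i).nonneg g) (le_max_right 1 _) l) ?_
            exact pow_le_pow_right₀ hmax1 (Nat.lt_succ_iff.mp (Finset.mem_range.mp hl))
        _ = ((n:ℝ) + 1) * (max 1 (M.v i g)) ^ n := by
            rw [Finset.sum_const, Finset.card_range, nsmul_eq_mul]; push_cast; ring
        _ ≤ (2:ℝ) ^ n * (max 1 (M.v i g)) ^ n := by
            refine mul_le_mul_of_nonneg_right ?_ (by positivity)
            have := Nat.lt_two_pow_self (n := n)
            have : (n + 1 : ℕ) ≤ 2 ^ n := this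
            exact_mod_cast this
        _ = (2 * max 1 (M.v i g)) ^ n := by rw [mul_pow]
    have hlog : Real.log (M.v i α) ≤ (n:ℝ) * Real.log (2 * max 1 (M.v i g)) := by
      refine le_trans (Real.log_le_log (lt_trans one_pos hv1) hvαle) ?_
      rw [Real.log_pow]
    have hN0 : (0:ℝ) ≤ (M.N i : ℝ) := Nat.cast_nonneg _
    calc (M.N i : ℝ) * Real.log (M.v i α)
        ≤ (M.N i : ℝ) * ((n:ℝ) * Real.log (2 * max 1 (M.v i g))) :=
          mul_le_mul_of_nonneg_left hlog hN0
      _ = (n:ℝ) * ((M.N i : ℝ) * Real.log (2 * max 1 (M.v i g))) := by ring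
  -- P1 is inside T
  have hP1subT : P1 ⊆ hTfin.toFinset := by
    intro i hi
    rw [hP1def, Finset.mem_filter] at hi
    rw [Set.Finite.mem_toFinset]
    rcases M.arch_or_padic i with h | ⟨p, pp, hpv⟩
    · exact Or.inl h
    · right
      intro hvg1
      have hna := nonarch_of_natBounded (natBounded_of_padic (M.v i) pp hpv)
      have : M.v i α ≤ 1 := by
        rw [hαdef]
        refine abv_sum_le_of_le _ _ hna zero_le_one ?_
        intro l _
        rw [map_pow, hvg1, one_pow]
      exact absurd hi.2 (not_lt.mpr this)
  have hchain3 : ∑ i ∈ P1, (M.N i : ℝ) * Real.log (M.v i α) ≤ (n:ℝ) * B := by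
    refine le_trans (Finset.sum_le_sum hP1bound) ?_
    rw [← Finset.mul_sum]
    refine mul_le_mul_of_nonneg_left ?_ (Nat.cast_nonneg n)
    exact Finset.sum_le_sum_of_subset_of_nonneg hP1subT
      fun i _ _ => mul_nonneg (Nat.cast_nonneg _) (hlogmax_nonneg i)
  -- conclude
  have hfinal : Real.log 2 / (D:ℝ) * (∑ i ∈ hSfin.toFinset, (M.N i : ℝ)) ≤ (n:ℝ) * B := by
    linarith
  have hpos : 0 < Real.log 2 / (D:ℝ) := div_pos hlog2 hDpos
  have h1 : ∑ i ∈ hSfin.toFinset, (M.N i : ℝ) ≤ ((n:ℝ) * B) / (Real.log 2 / (D:ℝ)) :=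
    (le_div_iff₀' hpos).mpr hfinal
  have h2 : ((n:ℝ) * B) / (Real.log 2 / (D:ℝ)) = ((D:ℝ) * B / Real.log 2) * n := by
    field_simp
  rw [h2] at h1
  have h3 : ((D:ℝ) * B / Real.log 2) * n ≤ ((D:ℝ) * B / Real.log 2 + 1) * n := by
    have : (0:ℝ) ≤ (n:ℝ) := Nat.cast_nonneg n
    nlinarith
  linarith
end
end

section
/- Let λ ∈ ℂ ∖ {0} be such that 1 + λ + ⋯ + λ^j ≠ 0 for all j ≥ 1 and the series ∑_{i=1}^∞ 2^{−i} log|1 + λ + ⋯ + λ^i| converges. Then lim_{n→∞} |Res(P_n, Q_n)|^{−1/4^{n−1}} = |λ|^{−2} ∏_{j=1}^∞ |1 + λ + ⋯ + λ^j|^{−3·4^{−j−1}}, where Res(P_n, Q_n) denotes the resultant of the polynomials P_n and Q_n and the infinite product on the right converges. (This limit computes the homogeneous capacity of the set {G⁺ ≤ 0} ⊂ ℂ².) -/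
open Filter Topology

noncomputable section

/-- The resultant of two complex polynomials, computed over the algebraically
closed field `ℂ` as `Res(P,Q) = lc(P)^(deg Q) ∏_{α : P(α)=0} Q(α)`, the
product running over the roots of `P` with multiplicity. -/
def res (P Q : Polynomial ℂ) : ℂ :=
  P.leadingCoeff ^ Q.natDegree * (P.roots.map (fun a => Q.eval a)).prod

namespace ResLimitAux

open Polynomial

lemma card_roots_eq (p : Polynomial ℂ) : p.roots.card = p.natDegree :=
  Polynomial.splits_iff_card_roots.mp (IsAlgClosed.splits p)

lemma abs_multiset_prod (s : Multiset ℂ) :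
    norm s.prod = (s.map norm).prod :=
  map_multiset_prod (normHom : ℂ →*₀ ℝ) s

lemma eval_abs_factor (q : Polynomial ℂ) (a : ℂ) :
    norm (q.eval a)
      = norm q.leadingCoeff * (q.roots.map (fun b => norm (a - b))).prod := by
  conv_lhs => rw [← Polynomial.C_leadingCoeff_mul_prod_multiset_X_sub_C (card_roots_eq q)]
  rw [Polynomial.eval_mul, Polynomial.eval_C, norm_mul, Polynomial.eval_multiset_prod,
    Multiset.map_map, abs_multiset_prod, Multiset.map_map]
  simp

lemma abs_res_eq (p q : Polynomial ℂ) :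
    norm (res p q) = norm p.leadingCoeff ^ q.natDegree
      * norm q.leadingCoeff ^ p.natDegree
      * (p.roots.map (fun a => (q.roots.map (fun b => norm (a - b))).prod)).prod := by
  rw [res, norm_mul, norm_pow, abs_multiset_prod, Multiset.map_map]
  have : ∀ a ∈ p.roots, (norm ∘ fun a => q.eval a) a
      = norm q.leadingCoeff * (q.roots.map (fun b => norm (a - b))).prod :=
    fun a _ => eval_abs_factor q a
  rw [Multiset.map_congr rfl this, Multiset.prod_map_mul, Multiset.map_const',
    Multiset.prod_replicate, card_roots_eq]
  ring

lemma multiset_prod_swap {α β : Type*} (A : Multiset α) (B : Multiset β) (f : α → β → ℝ) :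
    (A.map (fun a => (B.map (fun b => f a b)).prod)).prod
      = (B.map (fun b => (A.map (fun a => f a b)).prod)).prod := by
  induction A using Multiset.induction with
  | empty => simp
  | cons a A ih => simp [ih, ← Multiset.prod_map_mul]

lemma abs_res_comm (p q : Polynomial ℂ) :
    norm (res p q) = norm (res q p) := by
  rw [abs_res_eq, abs_res_eq, multiset_prod_swap]
  have : ∀ b ∈ q.roots, ((p.roots.map (fun a => norm (a - b))).prod)
      = ((p.roots.map (fun a => norm (b - a))).prod) := by
    intro b _
    exact congrArg _ (Multiset.map_congr rfl (fun a _ => norm_sub_rev _ _))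
  rw [Multiset.map_congr rfl this]
  ring

lemma abs_res_eq' (p q : Polynomial ℂ) :
    norm (res p q) = norm p.leadingCoeff ^ q.natDegree
      * (p.roots.map (fun a => norm (q.eval a))).prod := by
  rw [res, norm_mul, norm_pow, abs_multiset_prod, Multiset.map_map]
  rfl

theorem res_step (lam : ℂ) (hlam : lam ≠ 0) (p q Q' : Polynomial ℂ)
    (m : ℕ)
    (hp : p ≠ 0) (hq : q ≠ 0)
    (hdp : p.natDegree = 2 ^ m - 1) (hdq : q.natDegree = 2 ^ m)
    (hdQ' : Q'.natDegree = 2 ^ (m+1))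
    (hQ' : Q' = p ^ 2 + X * p * q + q ^ 2) :
    norm (res (C lam * p * q) Q')
      = norm lam ^ (2 ^ (m+1)) * norm q.leadingCoeff ^ 2
        * norm (res p q) ^ 4 := by
  have h2m : 1 ≤ 2 ^ m := Nat.one_le_two_pow
  set x := norm p.leadingCoeff with hx
  set y := norm q.leadingCoeff with hy
  set A := (p.roots.map (fun a => norm (q.eval a))).prod with hA
  set B := (q.roots.map (fun a => norm (p.eval a))).prod with hB
  have hroots : (C lam * p * q).roots = p.roots + q.roots := by
    rw [mul_assoc, Polynomial.roots_C_mul _ hlam, Polynomial.roots_mul (mul_ne_zero hp hq)]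
  have hlc : norm (C lam * p * q).leadingCoeff = norm lam * x * y := by
    rw [mul_assoc, leadingCoeff_mul, leadingCoeff_mul, leadingCoeff_C, norm_mul, norm_mul]
    ring
  have hevP : ∀ a ∈ p.roots, norm (Q'.eval a) = norm (q.eval a) ^ 2 := by
    intro a ha
    have h0 : p.eval a = 0 := (Polynomial.mem_roots'.mp ha).2
    simp [hQ', h0, map_pow]
  have hevQ : ∀ a ∈ q.roots, norm (Q'.eval a) = norm (p.eval a) ^ 2 := by
    intro a ha
    have h0 : q.eval a = 0 := (Polynomial.mem_roots'.mp ha).2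
    simp [hQ', h0, map_pow]
  have hmain : norm (res (C lam * p * q) Q')
      = (norm lam * x * y) ^ (2 ^ (m+1)) * (A ^ 2 * B ^ 2) := by
    rw [abs_res_eq', hdQ', hroots, hlc, Multiset.map_add, Multiset.prod_add]
    congr 1
    rw [Multiset.map_congr rfl hevP, Multiset.map_congr rfl hevQ]
    congr 1
    · rw [hA, ← Multiset.prod_map_pow]
    · rw [hB, ← Multiset.prod_map_pow]
  have hR1 : norm (res p q) = x ^ (2 ^ m) * A := by
    rw [abs_res_eq', hdq]
  have hR2 : norm (res p q) = y ^ (2 ^ m - 1) * B := by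
    rw [abs_res_comm, abs_res_eq', hdp]
  have hR4 : norm (res p q) ^ 4 = (x ^ 2 ^ m * A) ^ 2 * (y ^ (2 ^ m - 1) * B) ^ 2 := by
    rw [show (4:ℕ) = 2 + 2 by norm_num, pow_add]
    nth_rewrite 1 [hR1]
    rw [hR2]
  rw [hmain, hR4]
  have hxD : x ^ 2 ^ (m+1) = (x ^ 2 ^ m) ^ 2 := by
    rw [← pow_mul, pow_succ]
  have hyD : y ^ 2 ^ (m+1) = (y ^ (2 ^ m - 1)) ^ 2 * y ^ 2 := by
    rw [← pow_mul, ← pow_add]; congr 1; rw [pow_succ]; omega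
  rw [mul_pow, mul_pow, hxD, hyD]
  ring

def Sl (lam : ℂ) (k : ℕ) : ℂ := ∑ i ∈ Finset.range (k + 1), lam ^ i

def cseq (lam : ℂ) : ℕ → ℂ
  | 0 => 1
  | n + 1 => (cseq lam n) ^ 2 * Sl lam (n + 1) / Sl lam n

def aseq (lam : ℂ) (n : ℕ) : ℂ := lam ^ (n + 1) * cseq lam n / Sl lam n

section
variable (lam : ℂ) (hlam : lam ≠ 0) (hS : ∀ j, Sl lam j ≠ 0)

lemma Sl_succ (k : ℕ) : Sl lam (k + 1) = Sl lam k + lam ^ (k + 1) := by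
  simp [Sl, Finset.sum_range_succ]

include hS in
lemma cseq_ne (n : ℕ) : cseq lam n ≠ 0 := by
  induction n with
  | zero => simp [cseq]
  | succ n ih =>
    simp only [cseq]
    exact div_ne_zero (mul_ne_zero (pow_ne_zero _ ih) (hS _)) (hS _)

include hlam hS in
lemma aseq_ne (n : ℕ) : aseq lam n ≠ 0 :=
  div_ne_zero (mul_ne_zero (pow_ne_zero _ hlam) (cseq_ne lam hS n)) (hS _)

include hlam hS in
theorem main_inv (P Q : ℕ → Polynomial ℂ)
    (hP1 : P 1 = C lam) (hQ1 : Q 1 = X + C 2)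
    (hPrec : ∀ n, 1 ≤ n → P (n + 1) = C lam * P n * Q n)
    (hQrec : ∀ n, 1 ≤ n → Q (n + 1) = (P n) ^ 2 + X * (P n) * (Q n) + (Q n) ^ 2) :
    ∀ m : ℕ, (P (m+1)).natDegree = 2 ^ m - 1 ∧ (P (m+1)).leadingCoeff = aseq lam m
      ∧ (Q (m+1)).natDegree = 2 ^ m ∧ (Q (m+1)).leadingCoeff = cseq lam m := by
  intro m
  induction m with
  | zero =>
    refine ⟨?_, ?_, ?_, ?_⟩ <;> simp [hP1, hQ1, aseq, cseq, Sl, leadingCoeff]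
  | succ m ih =>
    obtain ⟨hdP, hlP, hdQ, hlQ⟩ := ih
    have hane : aseq lam m ≠ 0 := aseq_ne lam hlam hS m
    have hcne : cseq lam m ≠ 0 := cseq_ne lam hS m
    have hPne : P (m+1) ≠ 0 := fun h => hane (by rw [← hlP, h]; simp)
    have hQne : Q (m+1) ≠ 0 := fun h => hcne (by rw [← hlQ, h]; simp)
    have h2m : 1 ≤ 2 ^ m := Nat.one_le_two_pow
    have hPQdeg : (P (m+1) * Q (m+1)).natDegree = 2 ^ (m+1) - 1 := by
      rw [natDegree_mul hPne hQne, hdP, hdQ]; omega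
    have hPQlc : (P (m+1) * Q (m+1)).leadingCoeff = aseq lam m * cseq lam m := by
      rw [leadingCoeff_mul, hlP, hlQ]
    have hPnew : P (m+2) = C lam * (P (m+1) * Q (m+1)) := by
      rw [hPrec (m+1) (by omega)]; ring
    have hdP' : (P (m+2)).natDegree = 2 ^ (m+1) - 1 := by
      rw [hPnew, natDegree_C_mul hlam, hPQdeg]
    have hlP' : (P (m+2)).leadingCoeff = aseq lam (m+1) := by
      rw [hPnew, leadingCoeff_mul, leadingCoeff_C, hPQlc, aseq, aseq, cseq]
      have := hS m; have := hS (m+1)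
      field_simp
      ring
    have hQnew := hQrec (m+1) (by omega)
    have hkey : (Q (m+2)).coeff (2 ^ (m+1)) = cseq lam (m+1) := by
      rw [hQnew]
      have e1 : ((P (m+1)) ^ 2).coeff (2 ^ (m+1)) = 0 := by
        apply coeff_eq_zero_of_natDegree_lt
        rw [pow_two, natDegree_mul hPne hPne, hdP]; omega
      have e2 : (X * P (m+1) * Q (m+1)).coeff (2 ^ (m+1)) = aseq lam m * cseq lam m := by
        have h1 : (2:ℕ) ^ (m+1) = ((P (m+1) * Q (m+1)).natDegree) + 1 := by rw [hPQdeg]; omega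
        rw [mul_assoc, h1, coeff_X_mul, ← hPQlc, leadingCoeff]
      have e3 : ((Q (m+1)) ^ 2).coeff (2 ^ (m+1)) = cseq lam m * cseq lam m := by
        have h1 : (2:ℕ) ^ (m+1) = (Q (m+1)).natDegree + (Q (m+1)).natDegree := by rw [hdQ]; omega
        rw [pow_two, h1, coeff_mul_degree_add_degree, ← hlQ]
      rw [coeff_add, coeff_add, e1, e2, e3, zero_add]
      rw [cseq, aseq, Sl_succ]
      have := hS m
      field_simp
      ring
    have hcne' : cseq lam (m+1) ≠ 0 := cseq_ne lam hS (m+1)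
    have hdle : (Q (m+2)).natDegree ≤ 2 ^ (m+1) := by
      rw [hQnew]
      refine le_trans (natDegree_add_le _ _) ?_
      refine max_le (le_trans (natDegree_add_le _ _) (max_le ?_ ?_)) ?_
      · rw [pow_two]; refine le_trans (natDegree_mul_le) ?_; rw [hdP]; omega
      · refine le_trans (natDegree_mul_le) ?_
        refine le_trans (add_le_add (natDegree_mul_le) le_rfl) ?_
        rw [hdP, hdQ, natDegree_X]; omega
      · rw [pow_two]; refine le_trans (natDegree_mul_le) ?_; rw [hdQ]; omega
    have hdQ' : (Q (m+2)).natDegree = 2 ^ (m+1) := by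
      refine le_antisymm hdle (le_natDegree_of_ne_zero ?_)
      rw [hkey]; exact hcne'
    have hlQ' : (Q (m+2)).leadingCoeff = cseq lam (m+1) := by
      rw [leadingCoeff, hdQ', hkey]
    exact ⟨hdP', hlP', hdQ', hlQ'⟩
end


theorem analysis_main (L : ℝ) (sg ga r : ℕ → ℝ)
    (hsg0 : sg 0 = 0) (hga0 : ga 0 = 0) (hr0 : r 0 = L)
    (hgarec : ∀ m, ga (m+1) = 2 * ga m + sg (m+1) - sg m)
    (hrrec : ∀ m, r (m+1) = 2^(m+1) * L + 2 * ga m + 4 * r m)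
    (hsum1 : Summable (fun j : ℕ => sg (j+1) / 2^(j+1))) :
    Tendsto (fun m : ℕ => r m / 4^m) atTop
      (𝓝 (2 * L + (3/4) * ∑' j : ℕ, sg (j+1) / 4^(j+1))) := by
  set H : ℕ → ℝ := fun m => ∑ j ∈ Finset.range m, sg (j+1) / 2^(j+1) with hHdef
  set K : ℕ → ℝ := fun m => ∑ j ∈ Finset.range m, sg (j+1) / 4^(j+1) with hKdef
  set W : ℕ → ℝ := fun m => ∑ k ∈ Finset.range m, H k / 2^(k+1) with hWdef
  have hH0 : H 0 = 0 := by simp [hHdef]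
  have hK0 : K 0 = 0 := by simp [hKdef]
  have hW0 : W 0 = 0 := by simp [hWdef]
  have hHs : ∀ m, H (m+1) = H m + sg (m+1) / 2^(m+1) := by
    intro m; simp [hHdef, Finset.sum_range_succ]
  have hKs : ∀ m, K (m+1) = K m + sg (m+1) / 4^(m+1) := by
    intro m; simp [hKdef, Finset.sum_range_succ]
  have hWs : ∀ m, W (m+1) = W m + H m / 2^(m+1) := by
    intro m; simp [hWdef, Finset.sum_range_succ]
  have h4 : ∀ k : ℕ, (4:ℝ)^k = 2^k * 2^k := fun k => by rw [← mul_pow]; norm_num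
  have hgacf : ∀ m, ga (m+1) = sg (m+1) + 2^m * H m := by
    intro m
    induction m with
    | zero => rw [hgarec 0, hga0, hsg0, hH0]; ring
    | succ m ih =>
      rw [hgarec (m+1), ih, hHs]
      have h2 : ((2:ℝ))^(m+1) ≠ 0 := by positivity
      field_simp
      ring
  have hWcf : ∀ m, W (m+1) = K m - H m / 2^(m+1) := by
    intro m
    induction m with
    | zero => rw [hWs 0, hW0, hH0, hK0]; norm_num
    | succ m ih =>
      rw [hWs (m+1), ih, hKs, hHs]
      simp only [h4]
      have h2 : ((2:ℝ))^(m+1) ≠ 0 := by positivity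
      field_simp
      ring
  have hucf : ∀ m, r (m+1) / 4^(m+1)
      = (2 - (1/2:ℝ)^(m+1)) * L + (1/2) * K m + (1/4) * W m := by
    intro m
    induction m with
    | zero =>
      rw [hrrec 0, hga0, hr0, hK0, hW0]
      ring
    | succ m ih =>
      have h4m : ((4:ℝ))^(m+1) ≠ 0 := by positivity
      have hrm1 : r (m+1)
          = 4^(m+1) * ((2 - (1/2:ℝ)^(m+1)) * L + (1/2) * K m + (1/4) * W m) := by
        rw [← ih]; field_simp
      rw [hrrec (m+1), hrm1, hgacf m, hKs, hWs]
      simp only [h4, div_pow, one_pow]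
      have h2 : ((2:ℝ))^(m+1) ≠ 0 := by positivity
      have h2' : ((2:ℝ))^(m+2) ≠ 0 := by positivity
      field_simp
      ring
  have hsumK : Summable (fun j : ℕ => sg (j+1) / 4^(j+1)) := by
    refine Summable.of_norm_bounded hsum1.abs (fun j => ?_)
    rw [Real.norm_eq_abs, abs_div, abs_div]
    rw [abs_of_pos (show (0:ℝ) < 4^(j+1) by positivity),
      abs_of_pos (show (0:ℝ) < 2^(j+1) by positivity)]
    refine div_le_div_of_nonneg_left (abs_nonneg _) (by positivity) ?_
    exact pow_le_pow_left₀ (by norm_num) (by norm_num) _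
  set Koo := ∑' j : ℕ, sg (j+1) / 4^(j+1) with hKoo
  have hKlim : Tendsto K atTop (𝓝 Koo) := hsumK.hasSum.tendsto_sum_nat
  have hHlim : Tendsto H atTop (𝓝 (∑' j : ℕ, sg (j+1) / 2^(j+1))) :=
    hsum1.hasSum.tendsto_sum_nat
  have hhalf : Tendsto (fun m : ℕ => ((1:ℝ)/2)^(m+1)) atTop (𝓝 0) := by
    have h := tendsto_pow_atTop_nhds_zero_of_lt_one (by norm_num : (0:ℝ) ≤ 1/2)
      (by norm_num : (1:ℝ)/2 < 1)
    exact h.comp (tendsto_add_atTop_nat 1)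
  have hWlim : Tendsto W atTop (𝓝 Koo) := by
    have hz : Tendsto (fun m : ℕ => H m / 2^(m+1)) atTop (𝓝 0) := by
      have h := hHlim.mul hhalf
      rw [mul_zero] at h
      refine h.congr (fun m => ?_)
      rw [div_pow, one_pow]
      ring
    have h1 : Tendsto (fun m => W (m+1)) atTop (𝓝 (Koo - 0)) :=
      Tendsto.congr (fun m => (hWcf m).symm) (hKlim.sub hz)
    rw [sub_zero] at h1
    exact (tendsto_add_atTop_iff_nat 1).mp h1
  have h1 : Tendsto (fun m : ℕ =>
      (2 - (1/2:ℝ)^(m+1)) * L + (1/2) * K m + (1/4) * W m) atTop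
      (𝓝 ((2 - 0) * L + (1/2) * Koo + (1/4) * Koo)) :=
    (((tendsto_const_nhds.sub hhalf).mul tendsto_const_nhds).add
      (tendsto_const_nhds.mul hKlim)).add (tendsto_const_nhds.mul hWlim)
  have h2 : ((2:ℝ) - 0) * L + (1/2) * Koo + (1/4) * Koo = 2 * L + (3/4) * Koo := by ring
  rw [h2] at h1
  have h3 : Tendsto (fun m : ℕ => r (m+1) / 4^(m+1)) atTop (𝓝 (2 * L + (3/4) * Koo)) :=
    Tendsto.congr (fun m => (hucf m).symm) h1
  exact (tendsto_add_atTop_iff_nat 1).mp h3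

end ResLimitAux

/-- Let `λ ≠ 0` satisfy `1 + λ + ⋯ + λʲ ≠ 0` for all `j ≥ 1`, and suppose
`∑_{i≥1} 2⁻ⁱ log |1 + λ + ⋯ + λⁱ|` converges.  Writing
`F_{λ,t}ⁿ(1,1) = (P_n(t), Q_n(t))`, the quantities
`|Res(P_n, Q_n)|^(-1/4^(n-1))` converge to
`|λ|⁻² ∏_{j≥1} |1 + λ + ⋯ + λʲ|^(-3·4^(-j-1))`, the infinite product being
convergent; this limit is the homogeneous capacity of `{G⁺ ≤ 0} ⊂ ℂ²`. -/
theorem resultant_limit_capacity (lam : ℂ) (hlam : lam ≠ 0)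
    (hnz : ∀ j : ℕ, 1 ≤ j → ∑ i ∈ Finset.range (j + 1), lam ^ i ≠ 0)
    (hsum : Summable (fun i : ℕ =>
      Real.log (norm (∑ j ∈ Finset.range (i + 1), lam ^ j)) / 2 ^ i))
    (P Q : ℕ → Polynomial ℂ)
    (hPQ : ∀ (n : ℕ) (t : ℂ), (Fh lam t)^[n] (1, 1) = ((P n).eval t, (Q n).eval t)) :
    Multipliable (fun j : ℕ =>
      (norm (∑ i ∈ Finset.range (j + 2), lam ^ i)) ^
        (-(3 : ℝ) / 4 ^ (j + 2))) ∧
    Tendsto (fun n : ℕ =>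
        (norm (res (P n) (Q n))) ^ (-(1 : ℝ) / 4 ^ (n - 1)))
      atTop
      (𝓝 ((norm lam) ^ (-2 : ℤ) * ∏' j : ℕ,
        (norm (∑ i ∈ Finset.range (j + 2), lam ^ i)) ^
          (-(3 : ℝ) / 4 ^ (j + 2)))) := by
  classical
  have hS : ∀ j, ResLimitAux.Sl lam j ≠ 0 := by
    intro j
    cases j with
    | zero => simp [ResLimitAux.Sl]
    | succ j => exact hnz (j+1) (by omega)
  have habs : ∀ z : ℂ, z ≠ 0 → (0:ℝ) < norm z := fun z hz => norm_pos_iff.mpr hz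
  -- polynomial identities from hPQ
  have hP1 : P 1 = Polynomial.C lam := by
    apply Polynomial.funext; intro t
    have h := congrArg Prod.fst (hPQ 1 t)
    simp [Fh] at h
    simp [← h]
  have hQ1 : Q 1 = Polynomial.X + Polynomial.C 2 := by
    apply Polynomial.funext; intro t
    have h := congrArg Prod.snd (hPQ 1 t)
    simp [Fh] at h
    simp [← h]; ring
  have hPrec : ∀ n, P (n+1) = Polynomial.C lam * P n * Q n := by
    intro n; apply Polynomial.funext; intro t
    have h := hPQ (n+1) t
    rw [Function.iterate_succ_apply', hPQ n t] at h
    have h1 := congrArg Prod.fst h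
    simp [Fh] at h1
    simp [← h1]
  have hQrec : ∀ n, Q (n+1) = (P n)^2 + Polynomial.X * P n * Q n + (Q n)^2 := by
    intro n; apply Polynomial.funext; intro t
    have h := hPQ (n+1) t
    rw [Function.iterate_succ_apply', hPQ n t] at h
    have h1 := congrArg Prod.snd h
    simp [Fh] at h1
    simp [← h1]
  obtain inv := ResLimitAux.main_inv lam hlam hS P Q hP1 hQ1
    (fun n _ => hPrec n) (fun n _ => hQrec n)
  -- resultant base and recursion
  have hres1 : norm (res (P 1) (Q 1)) = norm lam := by
    rw [hP1, hQ1]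
    unfold res
    simp
  have hresrec : ∀ m, norm (res (P (m+2)) (Q (m+2)))
      = norm lam ^ (2^(m+1)) * norm (ResLimitAux.cseq lam m) ^ 2
        * norm (res (P (m+1)) (Q (m+1))) ^ 4 := by
    intro m
    obtain ⟨hdP, hlP, hdQ, hlQ⟩ := inv m
    obtain ⟨hdP2, hlP2, hdQ2, hlQ2⟩ := inv (m+1)
    have hane := ResLimitAux.aseq_ne lam hlam hS m
    have hcne := ResLimitAux.cseq_ne lam hS m
    have hPne : P (m+1) ≠ 0 := fun h => hane (by rw [← hlP, h]; simp)
    have hQne : Q (m+1) ≠ 0 := fun h => hcne (by rw [← hlQ, h]; simp)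
    have hstep := ResLimitAux.res_step lam hlam (P (m+1)) (Q (m+1)) (Q (m+2)) m
      hPne hQne hdP hdQ hdQ2 (hQrec (m+1))
    rw [hPrec (m+1), hstep, hlQ]
  have hRpos : ∀ m, 0 < norm (res (P (m+1)) (Q (m+1))) := by
    intro m
    induction m with
    | zero => rw [hres1]; exact habs _ hlam
    | succ m ih =>
      rw [hresrec m]
      exact mul_pos (mul_pos (pow_pos (habs _ hlam) _)
        (pow_pos (habs _ (ResLimitAux.cseq_ne lam hS m)) _)) (pow_pos ih _)
  -- logarithmic recursions
  have hsg0 : Real.log (norm (ResLimitAux.Sl lam 0)) = 0 := by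
    simp [ResLimitAux.Sl]
  have hga0 : Real.log (norm (ResLimitAux.cseq lam 0)) = 0 := by
    simp [ResLimitAux.cseq]
  have hr0 : Real.log (norm (res (P 1) (Q 1))) = Real.log (norm lam) := by
    rw [hres1]
  have hgarec : ∀ m, Real.log (norm (ResLimitAux.cseq lam (m+1)))
      = 2 * Real.log (norm (ResLimitAux.cseq lam m))
        + Real.log (norm (ResLimitAux.Sl lam (m+1)))
        - Real.log (norm (ResLimitAux.Sl lam m)) := by
    intro m
    have hc := habs _ (ResLimitAux.cseq_ne lam hS m)
    have h1 := habs _ (hS m)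
    have h2 := habs _ (hS (m+1))
    have e : ResLimitAux.cseq lam (m+1)
        = (ResLimitAux.cseq lam m)^2 * ResLimitAux.Sl lam (m+1) / ResLimitAux.Sl lam m := rfl
    rw [e, norm_div, norm_mul, norm_pow, Real.log_div (by positivity) (by positivity),
      Real.log_mul (by positivity) (by positivity), Real.log_pow]
    push_cast
    ring
  have hrrec : ∀ m, Real.log (norm (res (P (m+2)) (Q (m+2))))
      = 2^(m+1) * Real.log (norm lam)
        + 2 * Real.log (norm (ResLimitAux.cseq lam m))
        + 4 * Real.log (norm (res (P (m+1)) (Q (m+1)))) := by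
    intro m
    have h1 := habs _ hlam
    have h2 := habs _ (ResLimitAux.cseq_ne lam hS m)
    have h3 := hRpos m
    rw [hresrec m, Real.log_mul (by positivity) (by positivity),
      Real.log_mul (by positivity) (by positivity), Real.log_pow, Real.log_pow, Real.log_pow]
    push_cast
    ring
  have hsum1 : Summable (fun j : ℕ =>
      Real.log (norm (ResLimitAux.Sl lam (j+1))) / 2^(j+1)) := by
    have h := (summable_nat_add_iff (f := fun i : ℕ =>
      Real.log (norm (∑ j ∈ Finset.range (i + 1), lam ^ j)) / 2 ^ i) 1).mpr hsum
    simpa [ResLimitAux.Sl] using h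
  have hulim := ResLimitAux.analysis_main (Real.log (norm lam))
    (fun k => Real.log (norm (ResLimitAux.Sl lam k)))
    (fun m => Real.log (norm (ResLimitAux.cseq lam m)))
    (fun m => Real.log (norm (res (P (m+1)) (Q (m+1)))))
    hsg0 hga0 hr0 hgarec hrrec hsum1
  -- the infinite product
  have hf : ∀ j : ℕ, (norm (∑ i ∈ Finset.range (j + 2), lam ^ i)) ^ (-(3:ℝ) / 4 ^ (j + 2))
      = Real.exp (Real.log (norm (ResLimitAux.Sl lam (j+1))) * (-(3:ℝ) / 4 ^ (j + 2))) :=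
    fun j => Real.rpow_def_of_pos (habs _ (hS (j+1))) _
  have hsumf : Summable (fun j : ℕ =>
      Real.log (norm (ResLimitAux.Sl lam (j+1))) * (-(3:ℝ) / 4 ^ (j + 2))) := by
    refine Summable.of_norm_bounded hsum1.abs (fun j => ?_)
    rw [Real.norm_eq_abs, abs_mul, abs_div, abs_neg,
      abs_of_pos (show (0:ℝ) < 4^(j+2) by positivity),
      abs_of_pos (show (0:ℝ) < (3:ℝ) by norm_num), abs_div,
      abs_of_pos (show (0:ℝ) < 2^(j+1) by positivity)]
    have hrw : |Real.log (norm (ResLimitAux.Sl lam (j+1)))| / 2^(j+1)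
        = |Real.log (norm (ResLimitAux.Sl lam (j+1)))| * (1 / 2^(j+1)) := by ring
    rw [hrw]
    refine mul_le_mul_of_nonneg_left ?_ (abs_nonneg _)
    rw [div_le_div_iff₀ (by positivity) (by positivity)]
    have hp : (2:ℝ)^(j+1) ≤ 4^(j+1) := pow_le_pow_left₀ (by norm_num) (by norm_num) _
    have hc : (4:ℝ)^(j+2) = 4^(j+1) * 4 := by ring
    have hz : (0:ℝ) < 2^(j+1) := by positivity
    linarith
  have hprod : HasProd (fun j : ℕ =>
      (norm (∑ i ∈ Finset.range (j + 2), lam ^ i)) ^ (-(3:ℝ) / 4 ^ (j + 2)))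
      (Real.exp (∑' j : ℕ,
        Real.log (norm (ResLimitAux.Sl lam (j+1))) * (-(3:ℝ) / 4 ^ (j + 2)))) := by
    have h := hsumf.hasSum.rexp
    have hfe : (Real.exp ∘ fun j : ℕ =>
        Real.log (norm (ResLimitAux.Sl lam (j+1))) * (-(3:ℝ) / 4 ^ (j + 2)))
        = fun j : ℕ =>
          (norm (∑ i ∈ Finset.range (j + 2), lam ^ i)) ^ (-(3:ℝ) / 4 ^ (j + 2)) :=
      funext fun j => (hf j).symm
    rw [← hfe]
    exact h
  refine ⟨hprod.multipliable, ?_⟩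
  have htsum : (∑' j : ℕ,
      Real.log (norm (ResLimitAux.Sl lam (j+1))) * (-(3:ℝ) / 4 ^ (j + 2)))
      = -(3/4) * ∑' j : ℕ, Real.log (norm (ResLimitAux.Sl lam (j+1))) / 4^(j+1) := by
    rw [← tsum_mul_left]
    congr 1
    funext j
    have h42 : (4:ℝ)^(j+2) = 4^(j+1) * 4 := by ring
    have h4n : ((4:ℝ))^(j+1) ≠ 0 := by positivity
    rw [h42]
    field_simp
  have hlam2 : (norm lam) ^ (-2:ℤ)
      = Real.exp (-(2 * Real.log (norm lam))) := by
    have hpos := habs _ hlam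
    rw [Real.exp_neg, show (2:ℝ) * Real.log (norm lam)
        = ((2:ℕ):ℝ) * Real.log (norm lam) by norm_num,
      Real.exp_nat_mul, Real.exp_log hpos, zpow_neg, zpow_ofNat]
  have hval : (norm lam) ^ (-2:ℤ) * ∏' j : ℕ,
      (norm (∑ i ∈ Finset.range (j + 2), lam ^ i)) ^ (-(3:ℝ) / 4 ^ (j + 2))
      = Real.exp (-(2 * Real.log (norm lam)
          + (3/4) * ∑' j : ℕ, Real.log (norm (ResLimitAux.Sl lam (j+1))) / 4^(j+1))) := by
    rw [hprod.tprod_eq, htsum, hlam2, ← Real.exp_add]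
    congr 1
    ring
  rw [hval]
  rw [← tendsto_add_atTop_iff_nat 1]
  have heq : ∀ m : ℕ, Real.exp (-(Real.log (norm (res (P (m+1)) (Q (m+1)))) / 4^m))
      = (norm (res (P (m+1)) (Q (m+1)))) ^ (-(1:ℝ) / 4^(m+1-1)) := by
    intro m
    rw [Nat.add_sub_cancel, Real.rpow_def_of_pos (hRpos m)]
    congr 1
    ring
  refine Tendsto.congr heq ?_
  exact (Real.continuous_exp.tendsto _).comp hulim.neg
end
end
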